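/- arXiv:2303.01215 — 6 statements merged into one kernel-verified Lean document; each statement's English description precedes it below -/
import Mathlib

section
/- Let L : ℝ^d → ℝ be differentiable with ρ-Lipschitz gradient on ℝ^d, and suppose L(θ) ≥ L* for all θ ∈ ℝ^d. Then the potential function Ψ̃(θ) := √(L(θ) − L*) is √(2ρ)-Lipschitz: |Ψ̃(θ₁) − Ψ̃(θ₂)| ≤ √(2ρ)‖θ₁ − θ₂‖ for all θ₁, θ₂ ∈ ℝ^d. -/
noncomputable section

open InnerProductSpace Set

/-- Derivative of `t ↦ L (x + t • v)`. -/
lemma aux_hasDerivAt {d : ℕ} {L : EuclideanSpace ℝ (Fin d) → ℝ}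
    (hdiff : Differentiable ℝ L) (x v : EuclideanSpace ℝ (Fin d)) (t : ℝ) :
    HasDerivAt (fun s : ℝ => L (x + s • v))
      (inner ℝ (gradient L (x + t • v)) v : ℝ) t := by
  have hφ : HasDerivAt (fun s : ℝ => x + s • v) v t := by
    simpa using ((hasDerivAt_id t).smul_const v).const_add x
  have hF := (hdiff (x + t • v)).hasGradientAt.hasFDerivAt
  have := hF.comp_hasDerivAt t hφ
  exact this

/-- The descent lemma. -/
lemma aux_descent {d : ℕ} {L : EuclideanSpace ℝ (Fin d) → ℝ} {ρ : ℝ}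
    (hρpos : 0 < ρ) (hdiff : Differentiable ℝ L)
    (hLip : ∀ x y : EuclideanSpace ℝ (Fin d),
      ‖gradient L x - gradient L y‖ ≤ ρ * ‖x - y‖)
    (x v : EuclideanSpace ℝ (Fin d)) :
    L (x + v) ≤ L x + inner ℝ (gradient L x) v + ρ / 2 * ‖v‖ ^ 2 := by
  set g : ℝ → ℝ := fun t =>
    L (x + t • v) - t * inner ℝ (gradient L x) v - ρ / 2 * t ^ 2 * ‖v‖ ^ 2 with hg
  have hderiv : ∀ t : ℝ, HasDerivAt g
      ((inner ℝ (gradient L (x + t • v)) v : ℝ) - inner ℝ (gradient L x) v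
        - ρ / 2 * (2 * t) * ‖v‖ ^ 2) t := by
    intro t
    have h := ((aux_hasDerivAt hdiff x v t).sub
      ((hasDerivAt_id t).mul_const (inner ℝ (gradient L x) v : ℝ))).sub
      (((hasDerivAt_pow 2 t).const_mul (ρ / 2)).mul_const (‖v‖ ^ 2))
    norm_num at h
    have e1 : ∀ y, fderiv ℝ L y v = (inner ℝ (gradient L y) v : ℝ) := fun y => by
      rw [gradient, InnerProductSpace.toDual_symm_apply]
    rw [e1, e1] at h
    exact h
  have hanti : AntitoneOn g (Icc (0 : ℝ) 1) := by
    apply antitoneOn_of_deriv_nonpos (convex_Icc 0 1)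
    · exact fun t _ => (hderiv t).continuousAt.continuousWithinAt
    · exact fun t _ => (hderiv t).differentiableAt.differentiableWithinAt
    · intro t ht
      rw [interior_Icc] at ht
      rw [(hderiv t).deriv]
      have h1 : (inner ℝ (gradient L (x + t • v)) v : ℝ) - inner ℝ (gradient L x) v
          = inner ℝ (gradient L (x + t • v) - gradient L x) v := by
        rw [inner_sub_left]
      rw [h1]
      have h2 : (inner ℝ (gradient L (x + t • v) - gradient L x) v : ℝ)
          ≤ ‖gradient L (x + t • v) - gradient L x‖ * ‖v‖ := real_inner_le_norm _ _
      have h3 : ‖gradient L (x + t • v) - gradient L x‖ ≤ ρ * ‖x + t • v - x‖ :=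
        hLip _ _
      have h4 : ‖x + t • v - x‖ = t * ‖v‖ := by
        have : x + t • v - x = t • v := by abel
        rw [this, norm_smul, Real.norm_eq_abs, abs_of_pos ht.1]
      rw [h4] at h3
      nlinarith [norm_nonneg v, ht.1.le, h2,
        mul_le_mul_of_nonneg_right h3 (norm_nonneg v)]
  have := hanti (left_mem_Icc.2 zero_le_one) (right_mem_Icc.2 zero_le_one) zero_le_one
  simp only [hg, zero_smul, one_smul, add_zero, zero_mul, zero_pow, one_mul, one_pow,
    mul_zero, sub_zero, mul_one] at this
  linarith [this]

/-- Gradient norm bound. -/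
lemma aux_gradbound {d : ℕ} {L : EuclideanSpace ℝ (Fin d) → ℝ} {ρ Lstar : ℝ}
    (hρpos : 0 < ρ) (hdiff : Differentiable ℝ L)
    (hLip : ∀ x y : EuclideanSpace ℝ (Fin d),
      ‖gradient L x - gradient L y‖ ≤ ρ * ‖x - y‖)
    (hlb : ∀ θ, Lstar ≤ L θ) (x : EuclideanSpace ℝ (Fin d)) :
    ‖gradient L x‖ ^ 2 ≤ 2 * ρ * (L x - Lstar) := by
  have h := aux_descent hρpos hdiff hLip x (-(ρ⁻¹ • gradient L x))
  have hinner : (inner ℝ (gradient L x) (-(ρ⁻¹ • gradient L x)) : ℝ)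
      = -(ρ⁻¹ * ‖gradient L x‖ ^ 2) := by
    rw [inner_neg_right, inner_smul_right, real_inner_self_eq_norm_sq]
    try ring
  have hnorm : ‖-(ρ⁻¹ • gradient L x)‖ ^ 2 = ρ⁻¹ ^ 2 * ‖gradient L x‖ ^ 2 := by
    rw [norm_neg, norm_smul, Real.norm_eq_abs, abs_of_pos (inv_pos.2 hρpos), mul_pow]
  rw [hinner, hnorm] at h
  have hlb' := hlb (x + -(ρ⁻¹ • gradient L x))
  have hρ0 : ρ ≠ 0 := hρpos.ne'
  have e : ρ / 2 * (ρ⁻¹ ^ 2 * ‖gradient L x‖ ^ 2) = ρ⁻¹ / 2 * ‖gradient L x‖ ^ 2 := by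
    field_simp
  have key : ρ⁻¹ / 2 * ‖gradient L x‖ ^ 2 ≤ L x - Lstar := by linarith
  have e2 : 2 * ρ * (ρ⁻¹ / 2 * ‖gradient L x‖ ^ 2) = ‖gradient L x‖ ^ 2 := by
    field_simp
  linarith [mul_le_mul_of_nonneg_left key (by positivity : (0:ℝ) ≤ 2 * ρ), e2]

lemma aux_onesided {d : ℕ} {L : EuclideanSpace ℝ (Fin d) → ℝ} {ρ Lstar : ℝ}
    (hρpos : 0 < ρ) (hdiff : Differentiable ℝ L)
    (hLip : ∀ x y : EuclideanSpace ℝ (Fin d),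
      ‖gradient L x - gradient L y‖ ≤ ρ * ‖x - y‖)
    (hlb : ∀ θ, Lstar ≤ L θ) (θ₁ θ₂ : EuclideanSpace ℝ (Fin d)) :
    Real.sqrt (L θ₁ - Lstar) - Real.sqrt (L θ₂ - Lstar) ≤
      Real.sqrt (2 * ρ) * ‖θ₁ - θ₂‖ := by
  set a : ℝ := L θ₁ - Lstar with ha
  set b : ℝ := L θ₂ - Lstar with hb
  set t : ℝ := ‖θ₁ - θ₂‖ with htdef
  have hbnn : 0 ≤ b := sub_nonneg.2 (hlb θ₂)
  have htnn : 0 ≤ t := norm_nonneg _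
  -- descent lemma at θ₂ with v = θ₁ - θ₂
  have hdesc := aux_descent hρpos hdiff hLip θ₂ (θ₁ - θ₂)
  rw [add_sub_cancel] at hdesc
  have hinner : (inner ℝ (gradient L θ₂) (θ₁ - θ₂) : ℝ) ≤ ‖gradient L θ₂‖ * t :=
    real_inner_le_norm _ _
  have hgb := aux_gradbound hρpos hdiff hLip hlb θ₂
  have hgrad : ‖gradient L θ₂‖ ≤ Real.sqrt (2 * ρ) * Real.sqrt b := by
    rw [← Real.sqrt_mul (by positivity : (0:ℝ) ≤ 2 * ρ) b]
    calc ‖gradient L θ₂‖ = Real.sqrt (‖gradient L θ₂‖ ^ 2) :=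
          (Real.sqrt_sq (norm_nonneg _)).symm
      _ ≤ Real.sqrt (2 * ρ * b) := Real.sqrt_le_sqrt hgb
  set c : ℝ := Real.sqrt (ρ / 2) with hc
  have hcnn : 0 ≤ c := Real.sqrt_nonneg _
  have hcsq : c ^ 2 = ρ / 2 := Real.sq_sqrt (by positivity)
  have h2c : Real.sqrt (2 * ρ) = 2 * c := by
    rw [hc, show (2:ℝ) * ρ = 2 ^ 2 * (ρ / 2) by ring,
      Real.sqrt_mul (by positivity), Real.sqrt_sq (by norm_num : (0:ℝ) ≤ 2)]
  have hbsq : Real.sqrt b ^ 2 = b := Real.sq_sqrt hbnn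
  have hkey : a ≤ (Real.sqrt b + c * t) ^ 2 := by
    have hgt : (inner ℝ (gradient L θ₂) (θ₁ - θ₂) : ℝ) ≤ (Real.sqrt (2 * ρ) * Real.sqrt b) * t :=
      hinner.trans (mul_le_mul_of_nonneg_right hgrad htnn)
    rw [h2c] at hgt
    nlinarith [hdesc, hgt, Real.sqrt_nonneg b]
  have hsqa : Real.sqrt a ≤ Real.sqrt b + c * t := by
    calc Real.sqrt a ≤ Real.sqrt ((Real.sqrt b + c * t) ^ 2) := Real.sqrt_le_sqrt hkey
      _ = Real.sqrt b + c * t := Real.sqrt_sq (by positivity)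
  have hsqnn : 0 ≤ Real.sqrt (2 * ρ) := Real.sqrt_nonneg _
  nlinarith [hsqa, mul_nonneg hcnn htnn]

/-- Lipschitzness of the potential `Ψ̃(θ) = √(L(θ) − L*)`.
If `L : ℝ^d → ℝ` is differentiable with `ρ`-Lipschitz gradient and bounded below by `Lstar`,
then `θ ↦ √(L(θ) − Lstar)` is `√(2ρ)`-Lipschitz. -/
theorem statement1 {d : ℕ} (L : EuclideanSpace ℝ (Fin d) → ℝ) (ρ Lstar : ℝ)
    (hρpos : 0 < ρ)
    (hdiff : Differentiable ℝ L)
    (hLip : ∀ x y : EuclideanSpace ℝ (Fin d),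
      ‖gradient L x - gradient L y‖ ≤ ρ * ‖x - y‖)
    (hlb : ∀ θ, Lstar ≤ L θ)
    (θ₁ θ₂ : EuclideanSpace ℝ (Fin d)) :
    |Real.sqrt (L θ₁ - Lstar) - Real.sqrt (L θ₂ - Lstar)| ≤
      Real.sqrt (2 * ρ) * ‖θ₁ - θ₂‖ := by
  rw [abs_sub_le_iff]
  constructor
  · exact aux_onesided hρpos hdiff hLip hlb θ₁ θ₂
  · rw [← norm_neg, neg_sub]
    exact aux_onesided hρpos hdiff hLip hlb θ₂ θ₁
end
end

section
/- Let U ⊆ ℝ^d be open and convex, let L : ℝ^d → ℝ be twice continuously differentiable with ‖∇²L(θ)‖ ≤ ρ for all θ ∈ U, and suppose L satisfies the μ-PL condition on U with infimum L* := inf_{θ∈U} L(θ). Let 0 < η ≤ 1/ρ and suppose û, û' ∈ U with û' = û − η∇L(û). Then, with Ψ̃(θ) := √(L(θ) − L*), one has Ψ̃(û) − Ψ̃(û') ≥ (√(2μ)/4) η ‖∇L(û)‖. -/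
noncomputable section

open InnerProductSpace

lemma aux_sqrt_alg (G sa sb sm η : ℝ) (hG : 0 ≤ G) (hsa0 : 0 ≤ sa) (hsb0 : 0 ≤ sb)
    (hsm0 : 0 ≤ sm) (hη : 0 < η) (hAB : η / 2 * G ^ 2 ≤ sa ^ 2 - sb ^ 2)
    (hsbsa : sb ≤ sa) (hsmsa : sm * sa ≤ G) :
    sm / 4 * η * G ≤ sa - sb := by
  rcases eq_or_lt_of_le hG with hG0 | hGpos
  · rw [← hG0]; simp; linarith
  · have h5 : 0 ≤ sa - sb := by linarith
    have key : η / 2 * G ^ 2 ≤ (sa - sb) * (2 * sa) := by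
      nlinarith [mul_nonneg h5 (by linarith : (0:ℝ) ≤ 2 * sa - (sa + sb))]
    have key2 : sm * (η / 2 * G ^ 2) ≤ sm * ((sa - sb) * (2 * sa)) :=
      mul_le_mul_of_nonneg_left key hsm0
    have key3 : sm * ((sa - sb) * (2 * sa)) ≤ (sa - sb) * (2 * G) := by
      have h6 : (sa - sb) * (2 * (sm * sa)) ≤ (sa - sb) * (2 * G) := by
        apply mul_le_mul_of_nonneg_left _ h5
        linarith
      nlinarith [h6]
    have key4 : sm * (η / 2 * G ^ 2) ≤ (sa - sb) * (2 * G) := le_trans key2 key3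
    nlinarith [key4, hGpos, mul_pos hGpos hGpos]

set_option maxHeartbeats 1000000 in
/-- One-step potential decrease for gradient descent under μ-PL.
Under the same setting as Statement 0, with `Ψ̃(θ) = √(L(θ) − Lstar)`, one gradient step
`u' = u − η∇L(u)` satisfies `Ψ̃(u) − Ψ̃(u') ≥ (√(2μ)/4) η ‖∇L(u)‖`. -/
theorem statement2 {d : ℕ} (U : Set (EuclideanSpace ℝ (Fin d)))
    (hUopen : IsOpen U) (hUconv : Convex ℝ U)
    (L : EuclideanSpace ℝ (Fin d) → ℝ) (hL : ContDiff ℝ 2 L)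
    (ρ μ Lstar η : ℝ) (hρpos : 0 < ρ) (hμpos : 0 < μ)
    (hHess : ∀ θ ∈ U, ‖fderiv ℝ (gradient L) θ‖ ≤ ρ)
    (hPL : ∀ θ ∈ U, μ * (L θ - Lstar) ≤ (1 / 2) * ‖gradient L θ‖ ^ 2)
    (hinf : IsGLB (L '' U) Lstar)
    (hη0 : 0 < η) (hη : η ≤ 1 / ρ)
    (u u' : EuclideanSpace ℝ (Fin d)) (hu : u ∈ U) (hu' : u' ∈ U)
    (hstep : u' = u - η • gradient L u) :
    Real.sqrt (2 * μ) / 4 * η * ‖gradient L u‖ ≤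
      Real.sqrt (L u - Lstar) - Real.sqrt (L u' - Lstar) := by
  classical
  set g := gradient L u with hg
  set v := u' - u with hv
  have hLdiff : Differentiable ℝ L := hL.differentiable (by norm_num)
  have hgradCD : ContDiff ℝ 1 (gradient L) := by
    have : gradient L = fun x => (toDual ℝ _).symm (fderiv ℝ L x) := rfl
    rw [this]
    exact (toDual ℝ _).symm.contDiff.comp (hL.fderiv_right (by norm_num))
  have hgradDiff : ∀ x ∈ U, DifferentiableAt ℝ (gradient L) x := fun x _ =>
    (hgradCD.differentiable one_ne_zero) x
  have hfd : ∀ x v', fderiv ℝ L x v' = inner ℝ (gradient L x) v' := by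
    intro x v'
    have h : (toDual ℝ _) (gradient L x) = fderiv ℝ L x :=
      (toDual ℝ _).apply_symm_apply _
    rw [← h]; rfl
  -- Lipschitz estimate for the gradient from `u`
  have hLip : ∀ x ∈ U, ‖gradient L x - gradient L u‖ ≤ ρ * ‖x - u‖ := fun x hx =>
    Convex.norm_image_sub_le_of_norm_fderiv_le hgradDiff hHess hUconv hu hx
  -- the curve
  set γ : ℝ → EuclideanSpace ℝ (Fin d) := fun t => u + t • v with hγ
  have hγmem : ∀ t ∈ Set.Icc (0:ℝ) 1, γ t ∈ U := fun t ht =>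
    hUconv.add_smul_sub_mem hu hu' ht
  -- the auxiliary function
  set ψ : ℝ → ℝ := fun t => L (γ t) - (inner ℝ g v) * t - (ρ * ‖v‖ ^ 2 / 2) * t ^ 2 with hψ
  have hψderiv : ∀ t : ℝ, HasDerivAt ψ
      ((inner ℝ (gradient L (γ t)) v : ℝ) - inner ℝ g v - ρ * ‖v‖ ^ 2 * t) t := by
    intro t
    have hc : HasDerivAt γ v t := by
      have h1 : HasDerivAt (fun t : ℝ => t • v) ((1:ℝ) • v) t :=
        (hasDerivAt_id t).smul_const v
      have h2 := h1.const_add u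
      simp only [one_smul] at h2
      exact h2
    have hL1 : HasDerivAt (fun t => L (γ t)) (fderiv ℝ L (γ t) v) t :=
      (hLdiff (γ t)).hasFDerivAt.comp_hasDerivAt t hc
    have h2 : HasDerivAt (fun t : ℝ => (inner ℝ g v : ℝ) * t) (inner ℝ g v : ℝ) t := by
      simpa using (hasDerivAt_id t).const_mul (inner ℝ g v : ℝ)
    have h3 : HasDerivAt (fun t : ℝ => (ρ * ‖v‖ ^ 2 / 2) * t ^ 2)
        ((ρ * ‖v‖ ^ 2 / 2) * (2 * t)) t := by
      simpa using (hasDerivAt_pow 2 t).const_mul (ρ * ‖v‖ ^ 2 / 2)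
    have := (hL1.sub h2).sub h3
    rw [hfd] at this
    exact this.congr_deriv (by ring)
  have hψanti : AntitoneOn ψ (Set.Icc (0:ℝ) 1) := by
    apply antitoneOn_of_deriv_nonpos (convex_Icc 0 1)
    · exact fun t _ => ((hψderiv t).differentiableAt).continuousAt.continuousWithinAt
    · exact fun t _ => ((hψderiv t).differentiableAt).differentiableWithinAt
    · intro t ht
      rw [interior_Icc] at ht
      rw [(hψderiv t).deriv]
      have htmem : γ t ∈ U := hγmem t ⟨le_of_lt ht.1, le_of_lt ht.2⟩
      have hsub : (inner ℝ (gradient L (γ t)) v : ℝ) - inner ℝ g v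
          = inner ℝ (gradient L (γ t) - g) v := by
        rw [inner_sub_left]
      have hb : (inner ℝ (gradient L (γ t) - g) v : ℝ) ≤ ρ * t * ‖v‖ ^ 2 := by
        calc (inner ℝ (gradient L (γ t) - g) v : ℝ)
            ≤ ‖gradient L (γ t) - g‖ * ‖v‖ := real_inner_le_norm _ _
          _ ≤ (ρ * ‖γ t - u‖) * ‖v‖ := by
              have := hLip (γ t) htmem
              exact mul_le_mul_of_nonneg_right this (norm_nonneg v)
          _ = ρ * t * ‖v‖ ^ 2 := by
              have hE : ‖γ t - u‖ = t * ‖v‖ := by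
                have hE2 : γ t - u = t • v := by simp [hγ]
                rw [hE2, norm_smul, Real.norm_eq_abs, abs_of_pos ht.1]
              rw [hE]; ring
      rw [hsub]
      nlinarith [hb]
  have hkey := hψanti (Set.left_mem_Icc.mpr zero_le_one) (Set.right_mem_Icc.mpr zero_le_one)
    zero_le_one
  have hγ0 : γ 0 = u := by simp [hγ]
  have hγ1 : γ 1 = u' := by simp [hγ, hv]
  have hψ0 : ψ 0 = L u := by simp [hψ, hγ0]
  have hψ1 : ψ 1 = L u' - inner ℝ g v - ρ * ‖v‖ ^ 2 / 2 := by
    simp only [hψ, hγ1, one_pow, mul_one]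
  -- compute inner ℝ g v and ‖v‖
  have hvval : v = -(η • g) := by rw [hv, hstep]; abel
  have hinner : (inner ℝ g v : ℝ) = -(η * ‖g‖ ^ 2) := by
    rw [hvval, inner_neg_right, real_inner_smul_right, real_inner_self_eq_norm_sq]
  have hnormv : ‖v‖ = η * ‖g‖ := by
    rw [hvval, norm_neg, norm_smul, Real.norm_eq_abs, abs_of_pos hη0]
  -- descent inequality
  have hρη : ρ * η ≤ 1 := by
    rw [le_div_iff₀ hρpos] at hη; linarith
  have hdesc : L u' ≤ L u - η / 2 * ‖g‖ ^ 2 := by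
    rw [hψ0, hψ1, hinner, hnormv] at hkey
    nlinarith [sq_nonneg ‖g‖, mul_nonneg (le_of_lt hη0) (sq_nonneg ‖g‖),
      mul_nonneg (mul_nonneg (le_of_lt hη0) (le_of_lt hη0)) (sq_nonneg ‖g‖)]
  -- lower bounds from infimum
  have hA : 0 ≤ L u - Lstar := by
    have := hinf.1 ⟨u, hu, rfl⟩; linarith
  have hB : 0 ≤ L u' - Lstar := by
    have := hinf.1 ⟨u', hu', rfl⟩; linarith
  have hsa2 : Real.sqrt (L u - Lstar) ^ 2 = L u - Lstar := Real.sq_sqrt hA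
  have hsb2 : Real.sqrt (L u' - Lstar) ^ 2 = L u' - Lstar := Real.sq_sqrt hB
  have hsm2 : Real.sqrt (2 * μ) ^ 2 = 2 * μ := Real.sq_sqrt (by linarith)
  have hPLu : μ * (L u - Lstar) ≤ 1 / 2 * ‖g‖ ^ 2 := hPL u hu
  have hsmsa : Real.sqrt (2 * μ) * Real.sqrt (L u - Lstar) ≤ ‖g‖ := by
    have h1 : (Real.sqrt (2 * μ) * Real.sqrt (L u - Lstar)) ^ 2 ≤ ‖g‖ ^ 2 := by
      rw [mul_pow, hsa2, hsm2]; linarith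
    exact (pow_le_pow_iff_left₀
      (mul_nonneg (Real.sqrt_nonneg _) (Real.sqrt_nonneg _)) (norm_nonneg g)
      (two_ne_zero)).mp h1
  exact aux_sqrt_alg ‖g‖ (Real.sqrt (L u - Lstar)) (Real.sqrt (L u' - Lstar))
    (Real.sqrt (2 * μ)) η (norm_nonneg g) (Real.sqrt_nonneg _) (Real.sqrt_nonneg _)
    (Real.sqrt_nonneg _) hη0 (by rw [hsa2, hsb2]; linarith)
    (Real.sqrt_le_sqrt (by nlinarith [sq_nonneg ‖g‖, hη0.le])) hsmsa
end
end

section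
/- Let L : ℝ^d → ℝ be twice continuously differentiable with ‖∇²L(θ)‖ ≤ ρ₂ for all θ ∈ ℝ^d. Let u : [0, ∞) → ℝ^d be differentiable with u'(t) = −∇L(u(t)) for all t ≥ 0, and suppose G := sup_{t≥0} ‖∇L(u(t))‖ is finite. Let η > 0, α > 0, and let H be a natural number with Hη ≤ α. Define gradient descent iterates ũ_{t+1} = ũ_t − η∇L(ũ_t) for 0 ≤ t < H. Then for all 0 ≤ t ≤ H: ‖ũ_t − u(tη)‖ ≤ e^{αρ₂}‖ũ_0 − u(0)‖ + e^{αρ₂} η G. -/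
noncomputable section

/-- Gradient descent tracks the gradient flow for one round.
If `L` is `C²` with global Hessian bound `ρ₂`, `u` is a gradient flow of `L` on `[0,∞)`
with `‖∇L(u(t))‖ ≤ G` for all `t ≥ 0`, and `ũ` are gradient-descent iterates with step `η`
performing `H ≤ α/η` steps, then `‖ũ_t − u(tη)‖ ≤ e^{αρ₂}‖ũ₀ − u(0)‖ + e^{αρ₂} η G`
for all `0 ≤ t ≤ H`. -/
theorem statement5 {d : ℕ} (L : EuclideanSpace ℝ (Fin d) → ℝ) (hL : ContDiff ℝ 2 L)
    (ρ₂ : ℝ) (hHess : ∀ θ, ‖fderiv ℝ (gradient L) θ‖ ≤ ρ₂)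
    (u : ℝ → EuclideanSpace ℝ (Fin d))
    (hflow : ∀ t : ℝ, 0 ≤ t → HasDerivAt u (-gradient L (u t)) t)
    (G : ℝ) (hG : ∀ t : ℝ, 0 ≤ t → ‖gradient L (u t)‖ ≤ G)
    (η α : ℝ) (hη : 0 < η) (hα : 0 < α)
    (H : ℕ) (hHη : (H : ℝ) * η ≤ α)
    (ut : ℕ → EuclideanSpace ℝ (Fin d))
    (hrec : ∀ t < H, ut (t + 1) = ut t - η • gradient L (ut t)) :
    ∀ t ≤ H, ‖ut t - u (t * η)‖ ≤
      Real.exp (α * ρ₂) * ‖ut 0 - u 0‖ + Real.exp (α * ρ₂) * η * G := by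
  have hρ₂ : 0 ≤ ρ₂ := le_trans (norm_nonneg _) (hHess 0)
  have hG0 : 0 ≤ G := le_trans (norm_nonneg _) (hG 0 le_rfl)
  -- gradient is differentiable and Lipschitz with constant ρ₂
  have hgradC : ContDiff ℝ 1 (gradient L) := by
    have h1 : ContDiff ℝ 1 (fderiv ℝ L) := hL.fderiv_right (by norm_num)
    exact ((InnerProductSpace.toDual ℝ
      (EuclideanSpace ℝ (Fin d))).symm.contDiff).comp h1
  have hgrad_diff : Differentiable ℝ (gradient L) := hgradC.differentiable one_ne_zero
  have hgcont : Continuous (gradient L) := hgrad_diff.continuous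
  have hlip : ∀ x y, ‖gradient L x - gradient L y‖ ≤ ρ₂ * ‖x - y‖ := by
    intro x y
    have := convex_univ.norm_image_sub_le_of_norm_fderiv_le
      (f := gradient L) (fun z _ => (hgrad_diff z)) (fun z _ => hHess z)
      (Set.mem_univ y) (Set.mem_univ x)
    simpa using this
  -- one-step estimate
  have key : ∀ t : ℕ, t < H → ‖ut (t + 1) - u ((t + 1 : ℕ) * η)‖ ≤
      (1 + η * ρ₂) * ‖ut t - u (t * η)‖ + ρ₂ * G * η ^ 2 := by
    intro t ht
    set a : ℝ := (t : ℝ) * η with ha_def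
    have ha0 : 0 ≤ a := by positivity
    set b : ℝ := a + η with hb_def
    have hab : a ≤ b := by simp [hb_def]; linarith
    have hbcast : ((t + 1 : ℕ) : ℝ) * η = b := by push_cast [hb_def, ha_def]; ring
    have hmem : ∀ s ∈ Set.uIcc a b, 0 ≤ s := by
      intro s hs
      rw [Set.uIcc_of_le hab] at hs
      exact le_trans ha0 hs.1
    have hderiv : ∀ s ∈ Set.uIcc a b, HasDerivAt u (-gradient L (u s)) s :=
      fun s hs => hflow s (hmem s hs)
    have hucont : ContinuousOn u (Set.uIcc a b) :=
      fun s hs => (hflow s (hmem s hs)).continuousAt.continuousWithinAt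
    have hint1 : IntervalIntegrable (fun s => gradient L (u s)) MeasureTheory.volume a b :=
      (hgcont.comp_continuousOn hucont).intervalIntegrable
    have hftc : ∫ s in a..b, -gradient L (u s) = u b - u a :=
      intervalIntegral.integral_eq_sub_of_hasDerivAt hderiv hint1.neg
    have hub : u b = u a - ∫ s in a..b, gradient L (u s) := by
      rw [intervalIntegral.integral_neg] at hftc
      linear_combination (norm := module) -hftc
    have hsplit : ∫ s in a..b, (gradient L (u s) - gradient L (u a)) =
        (∫ s in a..b, gradient L (u s)) - η • gradient L (u a) := by
      rw [intervalIntegral.integral_sub hint1 intervalIntegrable_const,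
        intervalIntegral.integral_const]
      congr 2
      simp [hb_def]
    -- decomposition
    have hdecomp : ut (t + 1) - u (((t + 1 : ℕ) : ℝ) * η) =
        (ut t - u a - η • (gradient L (ut t) - gradient L (u a)))
          + ∫ s in a..b, (gradient L (u s) - gradient L (u a)) := by
      rw [hbcast, hrec t ht, hub, hsplit]
      module
    -- bound on u s - u a
    have hstep : ∀ s ∈ Set.Icc a b, ‖u s - u a‖ ≤ G * η := by
      intro s hs
      have h1 : ‖u s - u a‖ ≤ G * ‖s - a‖ := by
        refine (convex_Icc a b).norm_image_sub_le_of_norm_hasDerivWithin_le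
          (f' := fun s => -gradient L (u s))
          (fun x hx => (hflow x (le_trans ha0 hx.1)).hasDerivWithinAt)
          (fun x hx => by simpa using hG x (le_trans ha0 hx.1))
          (Set.left_mem_Icc.2 hab) hs
      have h2 : ‖s - a‖ ≤ η := by
        rw [Real.norm_eq_abs, abs_of_nonneg (by linarith [hs.1])]
        have := hs.2; simp [hb_def] at this; linarith
      calc ‖u s - u a‖ ≤ G * ‖s - a‖ := h1
        _ ≤ G * η := by exact mul_le_mul_of_nonneg_left h2 hG0
    have hintbound : ‖∫ s in a..b, (gradient L (u s) - gradient L (u a))‖ ≤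
        ρ₂ * G * η ^ 2 := by
      have h := intervalIntegral.norm_integral_le_of_norm_le_const
        (C := ρ₂ * (G * η)) (f := fun s => gradient L (u s) - gradient L (u a))
        (a := a) (b := b) ?_
      · have : |b - a| = η := by rw [hb_def]; simp [abs_of_nonneg hη.le]
        rw [this] at h
        calc ‖_‖ ≤ ρ₂ * (G * η) * η := h
          _ = ρ₂ * G * η ^ 2 := by ring
      · intro s hs
        rw [Set.uIoc_of_le hab] at hs
        calc ‖gradient L (u s) - gradient L (u a)‖ ≤ ρ₂ * ‖u s - u a‖ := hlip _ _
          _ ≤ ρ₂ * (G * η) := mul_le_mul_of_nonneg_left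
              (hstep s ⟨hs.1.le, hs.2⟩) hρ₂
    calc ‖ut (t + 1) - u (((t + 1 : ℕ) : ℝ) * η)‖
        ≤ ‖ut t - u a - η • (gradient L (ut t) - gradient L (u a))‖ +
          ‖∫ s in a..b, (gradient L (u s) - gradient L (u a))‖ := by
          rw [hdecomp]; exact norm_add_le _ _
      _ ≤ (‖ut t - u a‖ + η * (ρ₂ * ‖ut t - u a‖)) + ρ₂ * G * η ^ 2 := by
          refine add_le_add (le_trans (norm_sub_le _ _) ?_) hintbound
          refine add_le_add_right ?_ _
          rw [norm_smul, Real.norm_eq_abs, abs_of_nonneg hη.le]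
          have hua : ‖gradient L (ut t) - gradient L (u a)‖ ≤ ρ₂ * ‖ut t - u a‖ :=
            hlip _ _
          exact mul_le_mul_of_nonneg_left hua hη.le
      _ = (1 + η * ρ₂) * ‖ut t - u a‖ + ρ₂ * G * η ^ 2 := by ring
  -- discrete Gronwall by induction
  have main : ∀ t : ℕ, t ≤ H → ‖ut t - u (t * η)‖ ≤
      (1 + η * ρ₂) ^ t * ‖ut 0 - u 0‖ + ((1 + η * ρ₂) ^ t - 1) * (η * G) := by
    intro t
    induction t with
    | zero => intro _; simp
    | succ t ih =>
      intro ht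
      have ht' : t < H := Nat.lt_of_succ_le ht
      have hP : (0:ℝ) ≤ 1 + η * ρ₂ := by positivity
      calc ‖ut (t + 1) - u ((t + 1 : ℕ) * η)‖
          ≤ (1 + η * ρ₂) * ‖ut t - u (t * η)‖ + ρ₂ * G * η ^ 2 := key t ht'
        _ ≤ (1 + η * ρ₂) * ((1 + η * ρ₂) ^ t * ‖ut 0 - u 0‖ +
              ((1 + η * ρ₂) ^ t - 1) * (η * G)) + ρ₂ * G * η ^ 2 := by
            exact add_le_add_left (mul_le_mul_of_nonneg_left (ih ht'.le) hP) _
        _ = (1 + η * ρ₂) ^ (t + 1) * ‖ut 0 - u 0‖ +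
              ((1 + η * ρ₂) ^ (t + 1) - 1) * (η * G) := by ring
  intro t ht
  have hP : (0:ℝ) ≤ 1 + η * ρ₂ := by positivity
  have htα : (t : ℝ) * η ≤ α :=
    le_trans (mul_le_mul_of_nonneg_right (Nat.cast_le.2 ht) hη.le) hHη
  have h1 : (1 + η * ρ₂) ^ t ≤ Real.exp (α * ρ₂) := by
    calc (1 + η * ρ₂) ^ t ≤ Real.exp (η * ρ₂) ^ t :=
          pow_le_pow_left₀ hP (by linarith [Real.add_one_le_exp (η * ρ₂)]) t
      _ = Real.exp ((t : ℝ) * (η * ρ₂)) := by rw [← Real.exp_nat_mul]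
      _ ≤ Real.exp (α * ρ₂) := by
          apply Real.exp_le_exp.2
          calc (t : ℝ) * (η * ρ₂) = ((t : ℝ) * η) * ρ₂ := by ring
            _ ≤ α * ρ₂ := mul_le_mul_of_nonneg_right htα hρ₂
  calc ‖ut t - u (t * η)‖
      ≤ (1 + η * ρ₂) ^ t * ‖ut 0 - u 0‖ + ((1 + η * ρ₂) ^ t - 1) * (η * G) :=
        main t ht
    _ ≤ Real.exp (α * ρ₂) * ‖ut 0 - u 0‖ + Real.exp (α * ρ₂) * η * G := by
        refine add_le_add (mul_le_mul_of_nonneg_right h1 (norm_nonneg _)) ?_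
        have hηG : 0 ≤ η * G := mul_nonneg hη.le hG0
        calc ((1 + η * ρ₂) ^ t - 1) * (η * G) ≤ Real.exp (α * ρ₂) * (η * G) :=
              mul_le_mul_of_nonneg_right (by linarith) hηG
          _ = Real.exp (α * ρ₂) * η * G := by ring
end
end

section
/- Let L : ℝ^d → ℝ be twice continuously differentiable with ‖∇²L(θ)‖ ≤ ρ₂ for all θ ∈ ℝ^d. Fix deterministic points ũ_0, …, ũ_{H−1} ∈ ℝ^d, a learning rate η > 0, constants α, σ_max > 0 with Hη ≤ α, and K workers. On a probability space, let (z_{k,τ})_{k∈{1,…,K}, 0≤τ<H} be ℝ^d-valued random vectors with ‖z_{k,τ}‖ ≤ σ_max almost surely, such that each z_{k,τ} has conditional expectation zero given the σ-algebra generated by all z_{k',τ'} with lexicographically earlier index (τ', k'). Define Z̃_{k,0} := 0 and Z̃_{k,t} := Σ_{τ=0}^{t−1} ( ∏_{l=τ+1}^{t−1} (I − η∇²L(ũ_l)) ) z_{k,τ} for 1 ≤ t ≤ H. Then for every δ ∈ (0,1), with probability at least 1 − δ, simultaneously for all k ∈ {1,…,K} and all 0 ≤ t ≤ H: ‖Z̃_{k,t}‖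 ≤ e^{αρ₂} σ_max √(2H log(2HK/δ)). -/
open MeasureTheory

noncomputable section

/-- The ordered product `A_{b-1} * A_{b-2} * ⋯ * A_a` of continuous linear maps
(the identity when `b ≤ a`); applied to a vector it applies `A_a` first. -/
noncomputable def clmProd {d : ℕ}
    (A : ℕ → (EuclideanSpace ℝ (Fin d) →L[ℝ] EuclideanSpace ℝ (Fin d)))
    (a b : ℕ) : EuclideanSpace ℝ (Fin d) →L[ℝ] EuclideanSpace ℝ (Fin d) :=
  ((List.range (b - a)).map (fun i => A (b - 1 - i))).prod

/-- The σ-algebra generated by the noise variables `z k' τ'` whose index `(τ', k')`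
is lexicographically earlier than `(t, k)`. -/
noncomputable def pastSA {d K : ℕ} {Ω : Type} [MeasurableSpace Ω]
    (z : Fin K → ℕ → Ω → EuclideanSpace ℝ (Fin d)) (k : Fin K) (t : ℕ) :
    MeasurableSpace Ω :=
  ⨆ (q : ℕ × Fin K) (_ : q.1 < t ∨ (q.1 = t ∧ q.2 < k)),
    MeasurableSpace.comap (z q.2 q.1) inferInstance


section AuxProofs
open MeasureTheory Real Set

lemma aux_sinh_le (t : ℝ) (ht : 0 ≤ t) : Real.sinh t ≤ t * Real.cosh t := by
  have h : MonotoneOn (fun t : ℝ => t * Real.cosh t - Real.sinh t) (Set.Ici 0) := by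
    apply monotoneOn_of_deriv_nonneg (convex_Ici 0)
    · fun_prop
    · fun_prop
    · intro x hx
      rw [interior_Ici] at hx
      have hd : HasDerivAt (fun t : ℝ => t * Real.cosh t - Real.sinh t)
          (1 * Real.cosh x + x * Real.sinh x - Real.cosh x) x :=
        ((hasDerivAt_id x).mul (Real.hasDerivAt_cosh x)).sub (Real.hasDerivAt_sinh x)
      rw [hd.deriv]
      have h1 := Real.sinh_nonneg_iff.mpr (le_of_lt hx)
      have h2 : (0:ℝ) ≤ x := le_of_lt hx
      nlinarith [mul_nonneg h2 h1]
  have h0 := h (Set.self_mem_Ici) (Set.mem_Ici.mpr ht) ht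
  simpa using h0

lemma aux_S_mono : MonotoneOn (fun t : ℝ => Real.sinh t / t) (Set.Ioi 0) := by
  apply monotoneOn_of_deriv_nonneg (convex_Ioi 0)
  · exact ContinuousOn.div (Real.continuous_sinh.continuousOn) continuousOn_id
      (fun x hx => ne_of_gt hx)
  · rw [interior_Ioi]
    intro x hx
    exact ((Real.hasDerivAt_sinh x).div (hasDerivAt_id x) (ne_of_gt hx)).differentiableAt.differentiableWithinAt
  · rw [interior_Ioi]
    intro x hx
    have hd := (Real.hasDerivAt_sinh x).div (hasDerivAt_id x) (ne_of_gt hx)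
    simp only [id] at hd
    rw [show (fun t : ℝ => Real.sinh t / t) = Real.sinh / id from rfl, hd.deriv]
    have h1 := aux_sinh_le x (le_of_lt hx)
    have hx2 : (0:ℝ) < x ^ 2 := by simp only [Set.mem_Ioi] at hx; positivity
    rw [div_nonneg_iff]
    left
    constructor
    · nlinarith
    · positivity

lemma aux_convexOn_cosh_sqrt (lam : ℝ) (hlam : 0 ≤ lam) :
    ConvexOn ℝ (Set.Ici 0) (fun u => Real.cosh (lam * Real.sqrt u)) := by
  rcases eq_or_lt_of_le hlam with h0 | hpos
  · simp only [← h0, zero_mul, Real.cosh_zero]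
    exact convexOn_const _ (convex_Ici 0)
  have hderiv : ∀ u ∈ Set.Ioi (0:ℝ), HasDerivAt (fun u => Real.cosh (lam * Real.sqrt u))
      (Real.sinh (lam * Real.sqrt u) * (lam * (1 / (2 * Real.sqrt u)))) u := by
    intro u hu
    exact ((Real.hasDerivAt_sqrt (ne_of_gt hu)).const_mul lam).cosh
  have key : MonotoneOn (fun u => Real.sinh (lam * Real.sqrt u) * (lam * (1 / (2 * Real.sqrt u)))) (Set.Ioi 0) := by
    have heq : ∀ u ∈ Set.Ioi (0:ℝ), Real.sinh (lam * Real.sqrt u) * (lam * (1 / (2 * Real.sqrt u)))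
        = lam ^ 2 / 2 * (Real.sinh (lam * Real.sqrt u) / (lam * Real.sqrt u)) := by
      intro u hu
      have hs : Real.sqrt u ≠ 0 := ne_of_gt (Real.sqrt_pos.mpr hu)
      field_simp
    intro a ha b hb hab
    simp only []
    rw [heq a ha, heq b hb]
    apply mul_le_mul_of_nonneg_left _ (by positivity)
    have hsa : Real.sqrt a > 0 := Real.sqrt_pos.mpr ha
    have hsb : Real.sqrt b > 0 := Real.sqrt_pos.mpr hb
    exact aux_S_mono (by positivity : (0:ℝ) < lam * Real.sqrt a)
      (by positivity : (0:ℝ) < lam * Real.sqrt b)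
      (mul_le_mul_of_nonneg_left (Real.sqrt_le_sqrt hab) hlam)
  apply MonotoneOn.convexOn_of_deriv (convex_Ici 0)
  · fun_prop
  · rw [interior_Ici]
    intro u hu
    exact (hderiv u hu).differentiableAt.differentiableWithinAt
  · rw [interior_Ici]
    intro a ha b hb hab
    rw [(hderiv a ha).deriv, (hderiv b hb).deriv]
    exact key ha hb hab


variable {E : Type*} [NormedAddCommGroup E] [InnerProductSpace ℝ E]

lemma aux_pointwise (lam c : ℝ) (hlam : 0 ≤ lam) (hc : 0 < c)
    (x ξ : E) (hξ : ‖ξ‖ ≤ c) :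
    Real.cosh (lam * ‖x + ξ‖) ≤ Real.cosh (lam * ‖x‖) * Real.cosh (lam * c)
      + ((Real.cosh (lam * (‖x‖ + c)) - Real.cosh (lam * (‖x‖ - c))) / (2 * ‖x‖ * c))
          * (inner ℝ x ξ : ℝ) := by
  set m := ‖x‖ with hm
  have hm0 : 0 ≤ m := norm_nonneg x
  rcases eq_or_lt_of_le hm0 with h0 | hmpos
  · -- x = 0
    have hx0 : x = 0 := norm_eq_zero.mp h0.symm
    subst hx0
    rw [← h0]
    simp only [inner_zero_left, mul_zero, add_zero, zero_add, Real.cosh_zero, one_mul]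
    rw [Real.cosh_le_cosh]
    rw [abs_of_nonneg (by positivity), abs_of_nonneg (by positivity)]
    exact mul_le_mul_of_nonneg_left hξ hlam
  · have hs : |(inner ℝ x ξ : ℝ)| ≤ m * c :=
      le_trans (abs_real_inner_le_norm x ξ) (by
        exact mul_le_mul_of_nonneg_left hξ hm0)
    set s := (inner ℝ x ξ : ℝ) with hsdef
    set u := m ^ 2 + 2 * s + c ^ 2 with hu
    have habs := abs_le.mp hs
    have hun : ‖x + ξ‖ ^ 2 ≤ u := by
      rw [norm_add_sq_real]
      simp only [hu, ← hm, ← hsdef]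
      nlinarith [sq_nonneg ‖ξ‖, norm_nonneg ξ]
    have hu1 : (m - c) ^ 2 ≤ u := by nlinarith
    have hu2 : u ≤ (m + c) ^ 2 := by nlinarith
    -- step 1 : cosh (lam * ‖x+ξ‖) ≤ cosh (lam * sqrt u)
    have hsqrtu : ‖x + ξ‖ ≤ Real.sqrt u := by
      rw [show ‖x + ξ‖ = Real.sqrt (‖x + ξ‖ ^ 2) by rw [Real.sqrt_sq (norm_nonneg _)]]
      exact Real.sqrt_le_sqrt hun
    have step1 : Real.cosh (lam * ‖x + ξ‖) ≤ Real.cosh (lam * Real.sqrt u) := by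
      rw [Real.cosh_le_cosh, abs_of_nonneg (by positivity),
        abs_of_nonneg (by positivity)]
      exact mul_le_mul_of_nonneg_left hsqrtu hlam
    -- step 2 : chord bound via convexity
    have hconv := aux_convexOn_cosh_sqrt lam hlam
    set θ : ℝ := (2 * m * c - 2 * s) / (4 * m * c) with hθ
    have hmc : (0:ℝ) < 4 * m * c := by positivity
    have hθ0 : 0 ≤ θ := by
      apply div_nonneg _ (le_of_lt hmc); linarith
    have hθ1 : 0 ≤ 1 - θ := by
      rw [hθ]; rw [sub_nonneg, div_le_one hmc]; linarith
    have hcomb : θ * ((m - c) ^ 2) + (1 - θ) * ((m + c) ^ 2) = u := by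
      rw [hθ, hu, div_mul_eq_mul_div, one_sub_div hmc.ne', div_mul_eq_mul_div, ← add_div,
        div_eq_iff hmc.ne']
      ring
    have hchord := hconv.2 (Set.mem_Ici.mpr (sq_nonneg (m - c)))
      (Set.mem_Ici.mpr (sq_nonneg (m + c))) hθ0 hθ1 (by ring)
    simp only [smul_eq_mul] at hchord
    rw [hcomb] at hchord
    have hq1 : Real.sqrt ((m - c) ^ 2) = |m - c| := Real.sqrt_sq_eq_abs _
    have hq2 : Real.sqrt ((m + c) ^ 2) = m + c := Real.sqrt_sq (by positivity)
    rw [hq1, hq2] at hchord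
    have hcabs : Real.cosh (lam * |m - c|) = Real.cosh (lam * (m - c)) := by
      rw [show lam * |m - c| = |lam * (m - c)| by
        rw [abs_mul, abs_of_nonneg hlam], Real.cosh_abs]
    rw [hcabs] at hchord
    refine le_trans (le_trans step1 hchord) (le_of_eq ?_)
    -- algebra: θ * cosh(lam(m-c)) + (1-θ) * cosh(lam(m+c))
    --        = cosh(lam m) cosh(lam c) + coef * s
    have e1 : lam * (m + c) = lam * m + lam * c := by ring
    have e2 : lam * (m - c) = lam * m - lam * c := by ring
    rw [e1, e2, Real.cosh_add, Real.cosh_sub]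
    rw [hθ]
    field_simp
    ring


variable {Ω : Type} {mΩ : MeasurableSpace Ω} {μ : Measure Ω}

lemma aux_integrable_of_bounded [IsFiniteMeasure μ] {f : Ω → ℝ} (hf : AEStronglyMeasurable f μ)
    {C : ℝ} (hC : ∀ᵐ ω ∂μ, |f ω| ≤ C) : Integrable f μ :=
  ⟨hf, HasFiniteIntegral.of_bounded (C := C) (by simpa using hC)⟩

lemma aux_condexp_clm {Ω' : Type} {m mΩ' : MeasurableSpace Ω'} {μ' : Measure Ω'}
    [IsProbabilityMeasure μ'] (hm : m ≤ mΩ')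
    {E' F' : Type*} [NormedAddCommGroup E'] [NormedSpace ℝ E'] [CompleteSpace E']
    [NormedAddCommGroup F'] [NormedSpace ℝ F'] [CompleteSpace F']
    (T : E' →L[ℝ] F') {f : Ω' → E'} (hf : Integrable f μ') :
    (fun ω => T ((μ'[f|m]) ω)) =ᵐ[μ'] μ'[fun ω => T (f ω)|m] := by
  haveI : SigmaFinite (μ'.trim hm) := (isFiniteMeasure_trim hm).toSigmaFinite
  refine ae_eq_condExp_of_forall_setIntegral_eq hm (T.integrable_comp hf) ?_ ?_ ?_
  · intro s _ _
    exact (T.integrable_comp integrable_condExp).integrableOn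
  · intro s hs hμs
    rw [T.integral_comp_comm integrable_condExp.integrableOn,
      setIntegral_condExp hm hf hs, T.integral_comp_comm hf.integrableOn]
  · exact StronglyMeasurable.aestronglyMeasurable
      (T.continuous.comp_stronglyMeasurable stronglyMeasurable_condExp)

lemma aux_coord_le {d : ℕ} (x : EuclideanSpace ℝ (Fin d)) (i : Fin d) : |x i| ≤ ‖x‖ := by
  rw [EuclideanSpace.norm_eq, show |x i| = Real.sqrt (|x i| ^ 2) by
    rw [Real.sqrt_sq_eq_abs, abs_abs]]
  apply Real.sqrt_le_sqrt
  have : |x i| ^ 2 = ‖x i‖ ^ 2 := by rw [Real.norm_eq_abs]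
  rw [this]
  exact Finset.single_le_sum (f := fun j => ‖x j‖ ^ 2) (fun j _ => by positivity)
    (Finset.mem_univ i)


noncomputable def gcoef (lam c : ℝ) {d : ℕ} (v : EuclideanSpace ℝ (Fin d)) : ℝ :=
  (Real.cosh (lam * (‖v‖ + c)) - Real.cosh (lam * (‖v‖ - c))) / (2 * ‖v‖ * c)

lemma aux_gbound {d : ℕ} (lam c D : ℝ) (hlam : 0 ≤ lam) (hc : 0 < c) (hD : 0 ≤ D)
    (v : EuclideanSpace ℝ (Fin d)) (hv : ‖v‖ ≤ D) :
    |gcoef lam c v| * ‖v‖ ≤ Real.cosh (lam * (D + c)) / c := by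
  have hB1 : (0:ℝ) < Real.cosh (lam * (D + c)) := Real.cosh_pos _
  rcases eq_or_lt_of_le (norm_nonneg v) with h0 | hpos
  · rw [← h0, mul_zero]; positivity
  · have hcc : ∀ y : ℝ, |y| ≤ D + c → Real.cosh (lam * y) ≤ Real.cosh (lam * (D + c)) := by
      intro y hy
      rw [Real.cosh_le_cosh, abs_mul, abs_mul, abs_of_nonneg hlam,
        abs_of_nonneg (by positivity : (0:ℝ) ≤ D + c)]
      exact mul_le_mul_of_nonneg_left hy hlam
    have h1 : Real.cosh (lam * (‖v‖ + c)) ≤ Real.cosh (lam * (D + c)) := by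
      apply hcc; rw [abs_of_nonneg (by positivity)]; linarith
    have h2 : Real.cosh (lam * (‖v‖ - c)) ≤ Real.cosh (lam * (D + c)) := by
      apply hcc; rw [abs_le]; constructor <;> [linarith; linarith]
    have hgb : |gcoef lam c v| ≤ Real.cosh (lam * (D + c)) / (‖v‖ * c) := by
      rw [gcoef, abs_div, abs_of_nonneg (by positivity : (0:ℝ) ≤ 2 * ‖v‖ * c)]
      rw [div_le_div_iff₀ (by positivity) (by positivity)]
      have := Real.cosh_pos (x := lam * (‖v‖ + c))
      have := Real.cosh_pos (x := lam * (‖v‖ - c))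
      have habs : |Real.cosh (lam * (‖v‖ + c)) - Real.cosh (lam * (‖v‖ - c))| ≤
          2 * Real.cosh (lam * (D + c)) := by
        rw [abs_le]; constructor <;> nlinarith
      nlinarith [mul_le_mul_of_nonneg_right habs (le_of_lt (mul_pos hpos hc))]
    calc |gcoef lam c v| * ‖v‖ ≤ Real.cosh (lam * (D + c)) / (‖v‖ * c) * ‖v‖ :=
          mul_le_mul_of_nonneg_right hgb (norm_nonneg v)
      _ = Real.cosh (lam * (D + c)) / c := by field_simp


lemma aux_step {d : ℕ} {Ω : Type} {m mΩ : MeasurableSpace Ω} (hm : m ≤ mΩ)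
    (μ : Measure Ω) [IsProbabilityMeasure μ]
    (lam c CX : ℝ) (hlam : 0 ≤ lam) (hc : 0 < c) (hCX : 0 ≤ CX)
    (X ξ : Ω → EuclideanSpace ℝ (Fin d))
    (hX : Measurable[m] X) (hXb : ∀ᵐ ω ∂μ, ‖X ω‖ ≤ CX)
    (hξ : Measurable[mΩ] ξ) (hξb : ∀ᵐ ω ∂μ, ‖ξ ω‖ ≤ c)
    (hcond : μ[ξ|m] =ᵐ[μ] fun _ => (0 : EuclideanSpace ℝ (Fin d))) :
    ∫ ω, Real.cosh (lam * ‖X ω + ξ ω‖) ∂μ ≤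
      (∫ ω, Real.cosh (lam * ‖X ω‖) ∂μ) * Real.cosh (lam * c) := by
  haveI : SigmaFinite (μ.trim hm) := (isFiniteMeasure_trim hm).toSigmaFinite
  have hXm : Measurable[mΩ] X := hX.mono hm le_rfl
  set B : ℝ := Real.cosh (lam * (CX + c)) with hB
  have hB0 : 0 < B := Real.cosh_pos _
  have hcc : ∀ y : ℝ, |y| ≤ CX + c → Real.cosh (lam * y) ≤ B := by
    intro y hy
    rw [hB, Real.cosh_le_cosh, abs_mul, abs_mul, abs_of_nonneg hlam,
      abs_of_nonneg (by positivity : (0:ℝ) ≤ CX + c)]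
    exact mul_le_mul_of_nonneg_left hy hlam
  -- measurability building blocks
  have hgmeas : Measurable (fun v : EuclideanSpace ℝ (Fin d) => gcoef lam c v) := by
    have hn : Measurable (fun v : EuclideanSpace ℝ (Fin d) => ‖v‖) := measurable_norm
    apply Measurable.div
    · exact ((measurable_const.mul (hn.add_const c)).cosh).sub
        ((measurable_const.mul (hn.sub_const c)).cosh)
    · exact (measurable_const.mul hn).mul_const c
  have hgX : Measurable[mΩ] (fun ω => gcoef lam c (X ω)) := hgmeas.comp hXm
  have hgXm : Measurable[m] (fun ω => gcoef lam c (X ω)) := hgmeas.comp hX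
  -- the correction term
  set h : Ω → ℝ := fun ω => gcoef lam c (X ω) * (inner ℝ (X ω) (ξ ω) : ℝ) with hh
  have hinner : Measurable[mΩ] (fun ω => (inner ℝ (X ω) (ξ ω) : ℝ)) := by
    have : (fun ω => (inner ℝ (X ω) (ξ ω) : ℝ)) = fun ω => ∑ i : Fin d, X ω i * ξ ω i := by
      funext ω
      simp [PiLp.inner_apply, RCLike.inner_apply, conj_trivial]
      exact Finset.sum_congr rfl fun i _ => mul_comm _ _
    rw [this]
    exact Finset.measurable_sum _ (fun i _ =>
      ((measurable_pi_apply i).comp ((WithLp.measurable_ofLp 2 _).comp hXm)).mul ((measurable_pi_apply i).comp ((WithLp.measurable_ofLp 2 _).comp hξ)))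
  have hmeas_h : Measurable[mΩ] h := hgX.mul hinner
  have hb_gX : ∀ᵐ ω ∂μ, |gcoef lam c (X ω)| * ‖X ω‖ ≤ B / c :=
    hXb.mono fun ω hω => aux_gbound lam c CX hlam hc hCX _ hω
  have hb_h : ∀ᵐ ω ∂μ, |h ω| ≤ B := by
    filter_upwards [hb_gX, hξb] with ω h1 h2
    rw [hh]
    calc |gcoef lam c (X ω) * (inner ℝ (X ω) (ξ ω) : ℝ)|
        = |gcoef lam c (X ω)| * |(inner ℝ (X ω) (ξ ω) : ℝ)| := abs_mul _ _
      _ ≤ |gcoef lam c (X ω)| * (‖X ω‖ * c) := by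
          apply mul_le_mul_of_nonneg_left _ (abs_nonneg _)
          exact le_trans (abs_real_inner_le_norm _ _)
            (mul_le_mul_of_nonneg_left h2 (norm_nonneg _))
      _ = |gcoef lam c (X ω)| * ‖X ω‖ * c := by ring
      _ ≤ B / c * c := mul_le_mul_of_nonneg_right h1 (le_of_lt hc)
      _ = B := by field_simp
  -- integrability
  have int1 : Integrable (fun ω => Real.cosh (lam * ‖X ω + ξ ω‖)) μ := by
    apply aux_integrable_of_bounded
      ((measurable_const.mul (hXm.add hξ).norm).cosh.aestronglyMeasurable) (C := B)
    filter_upwards [hXb, hξb] with ω h1 h2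
    rw [abs_of_nonneg (le_of_lt (Real.cosh_pos _))]
    apply hcc
    rw [abs_of_nonneg (norm_nonneg _)]
    exact le_trans (norm_add_le _ _) (by linarith)
  have int2 : Integrable (fun ω => Real.cosh (lam * ‖X ω‖)) μ := by
    apply aux_integrable_of_bounded
      ((measurable_const.mul hXm.norm).cosh.aestronglyMeasurable) (C := B)
    filter_upwards [hXb] with ω h1
    rw [abs_of_nonneg (le_of_lt (Real.cosh_pos _))]
    apply hcc
    rw [abs_of_nonneg (norm_nonneg _)]
    linarith
  have inth : Integrable h μ := aux_integrable_of_bounded hmeas_h.aestronglyMeasurable hb_h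
  -- pointwise bound
  have hpt : ∀ᵐ ω ∂μ, Real.cosh (lam * ‖X ω + ξ ω‖) ≤
      Real.cosh (lam * ‖X ω‖) * Real.cosh (lam * c) + h ω := by
    filter_upwards [hξb] with ω hω
    exact aux_pointwise lam c hlam hc (X ω) (ξ ω) hω
  -- ∫ h = 0
  have hinth0 : ∫ ω, h ω ∂μ = 0 := by
    have hζint : Integrable ξ μ := by
      refine ⟨(hξ.stronglyMeasurable).aestronglyMeasurable, ?_⟩
      apply HasFiniteIntegral.of_bounded (C := c)
      exact hξb
    have hrw : h = fun ω => ∑ i : Fin d, (gcoef lam c (X ω) * X ω i) * ξ ω i := by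
      funext ω
      rw [hh]
      simp only [PiLp.inner_apply, RCLike.inner_apply, conj_trivial]
      rw [Finset.mul_sum]
      congr 1; funext i; ring
    rw [hrw, integral_finset_sum]
    · apply Finset.sum_eq_zero
      intro i _
      set Yi : Ω → ℝ := fun ω => gcoef lam c (X ω) * X ω i with hYi
      set ξi : Ω → ℝ := fun ω => ξ ω i with hξi
      have hYimeas : Measurable (fun v : EuclideanSpace ℝ (Fin d) => gcoef lam c v * v i) :=
        hgmeas.mul ((measurable_pi_apply i).comp (WithLp.measurable_ofLp 2 _))
      have hYim : Measurable[m] Yi := hYimeas.comp hX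
      have hYib : ∀ᵐ ω ∂μ, |Yi ω| ≤ B / c := by
        filter_upwards [hb_gX] with ω h1
        rw [hYi]
        calc |gcoef lam c (X ω) * X ω i| = |gcoef lam c (X ω)| * |X ω i| := abs_mul _ _
          _ ≤ |gcoef lam c (X ω)| * ‖X ω‖ :=
              mul_le_mul_of_nonneg_left (aux_coord_le _ i) (abs_nonneg _)
          _ ≤ B / c := h1
      have hξim : Measurable[mΩ] ξi := (measurable_pi_apply i).comp ((WithLp.measurable_ofLp 2 _).comp hξ)
      have hξib : ∀ᵐ ω ∂μ, |ξi ω| ≤ c := by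
        filter_upwards [hξb] with ω h1
        exact le_trans (aux_coord_le _ i) h1
      have hξiint : Integrable ξi μ := aux_integrable_of_bounded hξim.aestronglyMeasurable hξib
      have hprodint : Integrable (Yi * ξi) μ := by
        apply aux_integrable_of_bounded ((hYim.mono hm le_rfl).mul hξim).aestronglyMeasurable
          (C := B / c * c)
        filter_upwards [hYib, hξib] with ω h1 h2
        show |Yi ω * ξi ω| ≤ B / c * c
        rw [abs_mul]
        exact mul_le_mul h1 h2 (abs_nonneg _) (by positivity)
      have hcondi : μ[ξi|m] =ᵐ[μ] fun _ => (0:ℝ) := by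
        have h1 := aux_condexp_clm hm (EuclideanSpace.proj (𝕜 := ℝ) i) hζint
        have h2 : (fun ω => (EuclideanSpace.proj (𝕜 := ℝ) i) ((μ[ξ|m]) ω)) =ᵐ[μ]
            (fun _ => (0:ℝ)) := by
          filter_upwards [hcond] with ω hω
          rw [hω]; simp
        exact (h1.symm.trans h2)
      have hpull := condExp_mul_of_stronglyMeasurable_left hYim.stronglyMeasurable hprodint hξiint
      have hflip : ∫ ω, (Yi * ξi) ω ∂μ = ∫ ω, (μ[Yi * ξi|m]) ω ∂μ :=
        (integral_condExp hm (f := Yi * ξi)).symm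
      have hzero : (μ[Yi * ξi|m]) =ᵐ[μ] (fun _ => (0:ℝ)) := by
        refine hpull.trans ?_
        filter_upwards [hcondi] with ω hω
        rw [Pi.mul_apply, hω]
        simp
      calc ∫ ω, Yi ω * ξi ω ∂μ = ∫ ω, (μ[Yi * ξi|m]) ω ∂μ := hflip
        _ = ∫ _ω, (0:ℝ) ∂μ := integral_congr_ae hzero
        _ = 0 := integral_zero Ω ℝ
    · intro i _
      apply aux_integrable_of_bounded ((hgX.mul ((measurable_pi_apply i).comp ((WithLp.measurable_ofLp 2 _).comp hXm))).mul
        ((measurable_pi_apply i).comp ((WithLp.measurable_ofLp 2 _).comp hξ))).aestronglyMeasurable (C := B / c * c)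
      filter_upwards [hb_gX, hξb] with ω h1 h2
      show |gcoef lam c (X ω) * X ω i * ξ ω i| ≤ B / c * c
      rw [abs_mul, abs_mul]
      apply mul_le_mul
      · exact le_trans (mul_le_mul_of_nonneg_left (aux_coord_le _ i) (abs_nonneg _)) h1
      · exact le_trans (aux_coord_le _ i) h2
      · exact abs_nonneg _
      · positivity
  calc ∫ ω, Real.cosh (lam * ‖X ω + ξ ω‖) ∂μ
      ≤ ∫ ω, (Real.cosh (lam * ‖X ω‖) * Real.cosh (lam * c) + h ω) ∂μ :=
        integral_mono_ae int1 ((int2.mul_const _).add inth) hpt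
    _ = (∫ ω, Real.cosh (lam * ‖X ω‖) ∂μ) * Real.cosh (lam * c) + ∫ ω, h ω ∂μ := by
        rw [integral_add (int2.mul_const _) inth, integral_mul_const]
    _ = (∫ ω, Real.cosh (lam * ‖X ω‖) ∂μ) * Real.cosh (lam * c) := by rw [hinth0, add_zero]


lemma aux_pastSA_le {d K : ℕ} {Ω : Type} [mΩ : MeasurableSpace Ω]
    (z : Fin K → ℕ → Ω → EuclideanSpace ℝ (Fin d)) (hmeas : ∀ k t, Measurable (z k t))
    (k : Fin K) (t : ℕ) : pastSA z k t ≤ mΩ := by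
  apply iSup₂_le
  intro q _
  exact measurable_iff_comap_le.mp (hmeas q.2 q.1)

lemma aux_meas_pastSA {d K : ℕ} {Ω : Type} [mΩ : MeasurableSpace Ω]
    (z : Fin K → ℕ → Ω → EuclideanSpace ℝ (Fin d))
    (k : Fin K) (t τ : ℕ) (hτ : τ < t) : Measurable[pastSA z k t] (z k τ) := by
  rw [measurable_iff_comap_le]
  exact le_iSup₂ (f := fun (q : ℕ × Fin K)
    (_ : q.1 < t ∨ (q.1 = t ∧ q.2 < k)) => MeasurableSpace.comap (z q.2 q.1) inferInstance)
    (τ, k) (Or.inl hτ)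

lemma aux_mgf {d K : ℕ} {Ω : Type} [mΩ : MeasurableSpace Ω] (μ : Measure Ω)
    [IsProbabilityMeasure μ]
    (z : Fin K → ℕ → Ω → EuclideanSpace ℝ (Fin d)) (hmeas : ∀ k t, Measurable (z k t))
    (k : Fin K) (t : ℕ)
    (P : ℕ → (EuclideanSpace ℝ (Fin d) →L[ℝ] EuclideanSpace ℝ (Fin d)))
    (lam c : ℝ) (hlam : 0 ≤ lam) (hc : 0 < c)
    (hPz : ∀ τ, τ < t → ∀ᵐ ω ∂μ, ‖P τ (z k τ ω)‖ ≤ c)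
    (hcondP : ∀ τ, τ < t →
      μ[(fun ω => P τ (z k τ ω))|pastSA z k τ] =ᵐ[μ] fun _ => 0) :
    ∀ s, s ≤ t →
      ∫ ω, Real.cosh (lam * ‖∑ τ ∈ Finset.range s, P τ (z k τ ω)‖) ∂μ ≤
        Real.cosh (lam * c) ^ s := by
  intro s
  induction s with
  | zero =>
    intro _
    simp only [Finset.range_zero, Finset.sum_empty, norm_zero, mul_zero, Real.cosh_zero,
      pow_zero, integral_const, measure_univ, ENNReal.toReal_one, smul_eq_mul, one_mul]
    simp
  | succ s ih =>
    intro hst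
    have hs_lt : s < t := Nat.lt_of_lt_of_le (Nat.lt_succ_self s) hst
    have ihs := ih (le_of_lt hs_lt)
    set X : Ω → EuclideanSpace ℝ (Fin d) := fun ω => ∑ τ ∈ Finset.range s, P τ (z k τ ω)
      with hXdef
    set ξ : Ω → EuclideanSpace ℝ (Fin d) := fun ω => P s (z k s ω) with hξdef
    have hm := aux_pastSA_le z hmeas k s
    have hX : Measurable[pastSA z k s] X := by
      apply Finset.measurable_sum
      intro τ hτ
      exact ((P τ).continuous.measurable).comp
        (aux_meas_pastSA z k s τ (Finset.mem_range.mp hτ))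
    have hXb : ∀ᵐ ω ∂μ, ‖X ω‖ ≤ s * c := by
      have hall : ∀ᵐ ω ∂μ, ∀ τ, τ < s → ‖P τ (z k τ ω)‖ ≤ c := by
        rw [ae_all_iff]
        intro τ
        by_cases hτ : τ < s
        · filter_upwards [hPz τ (lt_trans hτ hs_lt)] with ω hω
          exact fun _ => hω
        · filter_upwards with ω hτ'
          exact absurd hτ' hτ
      filter_upwards [hall] with ω hω
      calc ‖X ω‖ ≤ ∑ τ ∈ Finset.range s, ‖P τ (z k τ ω)‖ := norm_sum_le _ _
        _ ≤ ∑ τ ∈ Finset.range s, c :=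
            Finset.sum_le_sum fun τ hτ => hω τ (Finset.mem_range.mp hτ)
        _ = s * c := by rw [Finset.sum_const, Finset.card_range]; simp
    have hξm : Measurable[mΩ] ξ := ((P s).continuous.measurable).comp (hmeas k s)
    have hstep := aux_step hm μ lam c (s * c) hlam hc (by positivity) X ξ hX hXb hξm
      (hPz s hs_lt) (hcondP s hs_lt)
    have hsum : ∀ ω, (∑ τ ∈ Finset.range (s+1), P τ (z k τ ω)) = X ω + ξ ω := by
      intro ω
      rw [Finset.sum_range_succ]
    calc ∫ ω, Real.cosh (lam * ‖∑ τ ∈ Finset.range (s+1), P τ (z k τ ω)‖) ∂μ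
        = ∫ ω, Real.cosh (lam * ‖X ω + ξ ω‖) ∂μ := by
          congr 1; funext ω; rw [hsum ω]
      _ ≤ (∫ ω, Real.cosh (lam * ‖X ω‖) ∂μ) * Real.cosh (lam * c) := hstep
      _ ≤ Real.cosh (lam * c) ^ s * Real.cosh (lam * c) :=
          mul_le_mul_of_nonneg_right ihs (le_of_lt (Real.cosh_pos _))
      _ = Real.cosh (lam * c) ^ (s + 1) := by ring

lemma aux_tail {d : ℕ} {Ω : Type} [mΩ : MeasurableSpace Ω] (μ : Measure Ω)
    [IsProbabilityMeasure μ]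
    (M : Ω → EuclideanSpace ℝ (Fin d)) (hM : Measurable M)
    (t H : ℕ) (htH : t ≤ H) (hH : 0 < H)
    (c R CM : ℝ) (hc : 0 < c) (hR : 0 < R)
    (hMb : ∀ᵐ ω ∂μ, ‖M ω‖ ≤ CM)
    (hmgf : ∀ lam, 0 ≤ lam →
      ∫ ω, Real.cosh (lam * ‖M ω‖) ∂μ ≤ Real.cosh (lam * c) ^ t) :
    μ {ω | R < ‖M ω‖} ≤ ENNReal.ofReal (2 * Real.exp (- (R^2 / (2 * H * c^2)))) := by
  set lam : ℝ := R / (H * c^2) with hlam_def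
  have hlam : 0 < lam := by positivity
  set f : Ω → ℝ := fun ω => Real.cosh (lam * ‖M ω‖) with hf
  have hfmeas : Measurable f := (measurable_const.mul hM.norm).cosh
  have hfint : Integrable f μ := by
    apply aux_integrable_of_bounded hfmeas.aestronglyMeasurable (C := Real.cosh (lam * |CM|))
    filter_upwards [hMb] with ω h1
    rw [abs_of_nonneg (le_of_lt (Real.cosh_pos _)), Real.cosh_le_cosh, abs_mul, abs_mul,
      abs_of_nonneg (le_of_lt hlam), abs_of_nonneg (norm_nonneg _), abs_abs]
    exact mul_le_mul_of_nonneg_left (le_trans h1 (le_abs_self CM)) (le_of_lt hlam)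
  have hfnonneg : 0 ≤ᵐ[μ] f := Filter.Eventually.of_forall fun ω => le_of_lt (Real.cosh_pos _)
  have hsub : {ω | R < ‖M ω‖} ⊆ {ω | Real.cosh (lam * R) ≤ f ω} := by
    intro ω hω
    simp only [Set.mem_setOf_eq] at hω ⊢
    rw [Real.cosh_le_cosh, abs_mul, abs_mul, abs_of_nonneg (le_of_lt hlam),
      abs_of_nonneg (le_of_lt hR), abs_of_nonneg (norm_nonneg _)]
    exact mul_le_mul_of_nonneg_left (le_of_lt hω) (le_of_lt hlam)
  have hmarkov := mul_meas_ge_le_integral_of_nonneg hfnonneg hfint (Real.cosh (lam * R))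
  have hcoshpos : (0:ℝ) < Real.cosh (lam * R) := Real.cosh_pos _
  -- bound on the integral
  have hIb : ∫ ω, f ω ∂μ ≤ Real.exp (H * (lam * c)^2 / 2) := by
    calc ∫ ω, f ω ∂μ ≤ Real.cosh (lam * c) ^ t := hmgf lam (le_of_lt hlam)
      _ ≤ Real.exp ((lam * c)^2 / 2) ^ t := by
          apply pow_le_pow_left₀ (le_of_lt (Real.cosh_pos _))
          exact Real.cosh_le_exp_half_sq _
      _ = Real.exp (t * ((lam * c)^2 / 2)) := by rw [← Real.exp_nat_mul]
      _ ≤ Real.exp (H * (lam * c)^2 / 2) := by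
          rw [Real.exp_le_exp]
          have : (t:ℝ) ≤ (H:ℝ) := Nat.cast_le.mpr htH
          nlinarith [sq_nonneg (lam * c)]
  have hexp : Real.exp (H * (lam * c)^2 / 2) * (2 * Real.exp (-(lam * R)))
      = 2 * Real.exp (- (R^2 / (2 * H * c^2))) := by
    have hHne : (H:ℝ) ≠ 0 := Nat.cast_ne_zero.mpr (Nat.pos_iff_ne_zero.mp hH)
    have heq : (H:ℝ) * (lam * c)^2 / 2 + -(lam * R) = - (R^2 / (2 * H * c^2)) := by
      rw [hlam_def]
      field_simp
      ring
    calc Real.exp ((H:ℝ) * (lam * c)^2 / 2) * (2 * Real.exp (-(lam * R)))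
        = 2 * (Real.exp ((H:ℝ) * (lam * c)^2 / 2) * Real.exp (-(lam * R))) := by ring
      _ = 2 * Real.exp ((H:ℝ) * (lam * c)^2 / 2 + -(lam * R)) := by rw [← Real.exp_add]
      _ = 2 * Real.exp (- (R^2 / (2 * H * c^2))) := by rw [heq]
  have hinvcosh : 1 / Real.cosh (lam * R) ≤ 2 * Real.exp (-(lam * R)) := by
    rw [div_le_iff₀ hcoshpos]
    have h1 : Real.exp (lam * R) / 2 ≤ Real.cosh (lam * R) := by
      rw [Real.cosh_eq]
      have := Real.exp_pos (-(lam * R))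
      linarith
    have h2 := Real.exp_pos (lam * R)
    have h3 := Real.exp_pos (-(lam * R))
    have h4 : Real.exp (-(lam * R)) * Real.exp (lam * R) = 1 := by
      rw [← Real.exp_add]; simp
    nlinarith
  -- conclude
  have hμfin : μ {ω | R < ‖M ω‖} ≠ ⊤ := measure_ne_top μ _
  rw [ENNReal.le_ofReal_iff_toReal_le hμfin (by positivity)]
  have hmono : (μ {ω | R < ‖M ω‖}).toReal ≤ (μ {ω | Real.cosh (lam * R) ≤ f ω}).toReal := by
    apply ENNReal.toReal_mono (measure_ne_top μ _)
    exact measure_mono hsub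
  calc (μ {ω | R < ‖M ω‖}).toReal ≤ (μ {ω | Real.cosh (lam * R) ≤ f ω}).toReal := hmono
    _ ≤ (∫ ω, f ω ∂μ) / Real.cosh (lam * R) := by
        rw [le_div_iff₀ hcoshpos]
        calc (μ {ω | Real.cosh (lam * R) ≤ f ω}).toReal * Real.cosh (lam * R)
            = Real.cosh (lam * R) * (μ {ω | Real.cosh (lam * R) ≤ f ω}).toReal := by ring
          _ ≤ ∫ ω, f ω ∂μ := hmarkov
    _ ≤ Real.exp (H * (lam * c)^2 / 2) * (2 * Real.exp (-(lam * R))) := by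
        rw [div_eq_mul_one_div]
        apply mul_le_mul hIb hinvcosh (by positivity) (le_of_lt (Real.exp_pos _))
    _ = 2 * Real.exp (- (R^2 / (2 * H * c^2))) := hexp

lemma aux_list_prod_norm {d : ℕ} (C : ℝ) (hC : 0 ≤ C)
    (g : ℕ → (EuclideanSpace ℝ (Fin d) →L[ℝ] EuclideanSpace ℝ (Fin d)))
    (hg : ∀ i, ‖g i‖ ≤ C) :
    ∀ n, ‖((List.range n).map g).prod‖ ≤ C ^ n := by
  intro n
  induction n with
  | zero =>
    simp only [List.range_zero, List.map_nil, List.prod_nil, pow_zero]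
    rw [ContinuousLinearMap.one_def]
    exact ContinuousLinearMap.norm_id_le
  | succ n ih =>
    rw [List.range_succ, List.map_append, List.prod_append, List.map_singleton,
      List.prod_singleton, pow_succ]
    exact le_trans (norm_mul_le _ _) (mul_le_mul ih (hg n) (norm_nonneg _) (by positivity))

end AuxProofs

/-- Azuma-type concentration for the linearized noise accumulation
`Z̃_{k,t} = ∑_{τ<t} (∏_{l=τ+1}^{t-1}(I − η∇²L(ũ_l))) z_{k,τ}` of Local SGD:
with probability at least `1 − δ`, simultaneously for all workers `k` and all `0 ≤ t ≤ H`,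
`‖Z̃_{k,t}‖ ≤ e^{αρ₂} σ_max √(2H log(2HK/δ))`. -/
theorem statement6 {d K : ℕ}
    (L : EuclideanSpace ℝ (Fin d) → ℝ) (hL : ContDiff ℝ 2 L)
    (ρ₂ : ℝ) (hHess : ∀ θ, ‖fderiv ℝ (gradient L) θ‖ ≤ ρ₂)
    (ut : ℕ → EuclideanSpace ℝ (Fin d))
    (η α σmax : ℝ) (hη : 0 < η) (hα : 0 < α) (hσ : 0 < σmax)
    (H : ℕ) (hHη : (H : ℝ) * η ≤ α)
    (Ω : Type) [MeasurableSpace Ω] (μ : Measure Ω) [IsProbabilityMeasure μ]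
    (z : Fin K → ℕ → Ω → EuclideanSpace ℝ (Fin d))
    (hmeas : ∀ k t, Measurable (z k t))
    (hbdd : ∀ (k : Fin K) (t : ℕ), t < H → ∀ᵐ ω ∂μ, ‖z k t ω‖ ≤ σmax)
    (hcond : ∀ (k : Fin K) (t : ℕ), t < H →
      μ[z k t | pastSA z k t] =ᵐ[μ] fun _ => (0 : EuclideanSpace ℝ (Fin d)))
    (δ : ℝ) (hδ0 : 0 < δ) (hδ1 : δ < 1) :
    ENNReal.ofReal (1 - δ) ≤
      μ {ω | ∀ k : Fin K, ∀ t ≤ H,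
        ‖∑ τ ∈ Finset.range t,
            (clmProd (fun l =>
                (1 : EuclideanSpace ℝ (Fin d) →L[ℝ] EuclideanSpace ℝ (Fin d)) -
                  η • fderiv ℝ (gradient L) (ut l)) (τ + 1) t)
              (z k τ ω)‖ ≤
          Real.exp (α * ρ₂) * σmax *
            Real.sqrt (2 * H * Real.log (2 * H * K / δ))} := by
  classical
  rcases Nat.eq_zero_or_pos K with hK0 | hKpos
  · subst hK0
    refine le_trans (ENNReal.ofReal_le_one.mpr (by linarith)) ?_
    rw [← measure_univ (μ := μ)]
    apply measure_mono
    intro ω _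
    simp only [Set.mem_setOf_eq]
    intro k
    exact k.elim0
  rcases Nat.eq_zero_or_pos H with hH0 | hHpos
  · subst hH0
    refine le_trans (ENNReal.ofReal_le_one.mpr (by linarith)) ?_
    rw [← measure_univ (μ := μ)]
    apply measure_mono
    intro ω _
    simp only [Set.mem_setOf_eq]
    intro k t ht
    have ht0 : t = 0 := Nat.le_zero.mp ht
    subst ht0
    simp
  -- main case
  have hρ₂ : 0 ≤ ρ₂ := le_trans (norm_nonneg _) (hHess (ut 0))
  set A : ℕ → (EuclideanSpace ℝ (Fin d) →L[ℝ] EuclideanSpace ℝ (Fin d)) :=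
    fun l => (1 : EuclideanSpace ℝ (Fin d) →L[ℝ] EuclideanSpace ℝ (Fin d)) -
      η • fderiv ℝ (gradient L) (ut l) with hA_def
  set c : ℝ := Real.exp (α * ρ₂) * σmax with hc_def
  have hc : 0 < c := by positivity
  set R : ℝ := Real.exp (α * ρ₂) * σmax *
    Real.sqrt (2 * H * Real.log (2 * H * K / δ)) with hR_def
  set M : Fin K → ℕ → Ω → EuclideanSpace ℝ (Fin d) := fun k t ω =>
    ∑ τ ∈ Finset.range t, (clmProd A (τ + 1) t) (z k τ ω) with hM_def
  show ENNReal.ofReal (1 - δ) ≤ μ {ω | ∀ k : Fin K, ∀ t ≤ H, ‖M k t ω‖ ≤ R}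
  have hH1 : (1:ℝ) ≤ (H:ℝ) := by exact_mod_cast hHpos
  have hK1 : (1:ℝ) ≤ (K:ℝ) := by exact_mod_cast hKpos
  have hD : (1:ℝ) < 2 * H * K / δ := by
    rw [lt_div_iff₀ hδ0]
    nlinarith
  have hlogD : 0 < Real.log (2 * H * K / δ) := Real.log_pos hD
  have hR : 0 < R := by
    rw [hR_def]
    have : 0 < Real.sqrt (2 * H * Real.log (2 * H * K / δ)) :=
      Real.sqrt_pos.mpr (by positivity)
    positivity
  have hMmeas : ∀ k t, Measurable (M k t) := by
    intro k t
    exact Finset.measurable_sum _ fun τ _ =>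
      ((clmProd A (τ + 1) t).continuous.measurable).comp (hmeas k τ)
  -- operator norm bound on the products
  have hPnorm : ∀ a b : ℕ, b ≤ H → ‖clmProd A a b‖ ≤ Real.exp (α * ρ₂) := by
    intro a b hb
    have hAnorm : ∀ l, ‖A l‖ ≤ 1 + η * ρ₂ := by
      intro l
      rw [hA_def]
      refine le_trans (norm_sub_le _ _) ?_
      have h1 : ‖(1 : EuclideanSpace ℝ (Fin d) →L[ℝ] EuclideanSpace ℝ (Fin d))‖ ≤ 1 := by
        rw [ContinuousLinearMap.one_def]; exact ContinuousLinearMap.norm_id_le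
      have h2 : ‖η • fderiv ℝ (gradient L) (ut l)‖ ≤ η * ρ₂ := by
        rw [norm_smul, Real.norm_eq_abs, abs_of_nonneg (le_of_lt hη)]
        exact mul_le_mul_of_nonneg_left (hHess _) (le_of_lt hη)
      linarith
    have hbound := aux_list_prod_norm (1 + η * ρ₂) (by positivity)
      (fun i => A (b - 1 - i)) (fun i => hAnorm _) (b - a)
    refine le_trans hbound ?_
    calc (1 + η * ρ₂) ^ (b - a) ≤ Real.exp (η * ρ₂) ^ (b - a) := by
          apply pow_le_pow_left₀ (by positivity)
          linarith [Real.add_one_le_exp (η * ρ₂)]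
      _ = Real.exp ((b - a : ℕ) * (η * ρ₂)) := (Real.exp_nat_mul _ _).symm
      _ ≤ Real.exp (α * ρ₂) := by
          rw [Real.exp_le_exp]
          have h1 : ((b - a : ℕ) : ℝ) ≤ (H : ℝ) :=
            Nat.cast_le.mpr (le_trans (Nat.sub_le b a) hb)
          have h2 : ((b - a : ℕ) : ℝ) * η ≤ α := le_trans
            (mul_le_mul_of_nonneg_right h1 (le_of_lt hη)) hHη
          nlinarith [mul_nonneg (mul_nonneg (Nat.cast_nonneg (b - a)) (le_of_lt hη)) hρ₂]
  -- per-(k,t) tail bound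
  have key : ∀ k : Fin K, ∀ t : ℕ, 1 ≤ t → t ≤ H →
      μ {ω | R < ‖M k t ω‖} ≤ ENNReal.ofReal (δ / (H * K)) := by
    intro k t ht1 htH
    set P : ℕ → (EuclideanSpace ℝ (Fin d) →L[ℝ] EuclideanSpace ℝ (Fin d)) :=
      fun τ => clmProd A (τ + 1) t with hP_def
    have hPz : ∀ τ, τ < t → ∀ᵐ ω ∂μ, ‖P τ (z k τ ω)‖ ≤ c := by
      intro τ hτ
      filter_upwards [hbdd k τ (lt_of_lt_of_le hτ htH)] with ω hω
      calc ‖P τ (z k τ ω)‖ ≤ ‖P τ‖ * ‖z k τ ω‖ := (P τ).le_opNorm _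
        _ ≤ Real.exp (α * ρ₂) * σmax := by
            apply mul_le_mul (hPnorm _ _ htH) hω (norm_nonneg _)
              (le_of_lt (Real.exp_pos _))
        _ = c := hc_def.symm
    have hcondP : ∀ τ, τ < t →
        μ[(fun ω => P τ (z k τ ω))|pastSA z k τ] =ᵐ[μ] fun _ => 0 := by
      intro τ hτ
      have hm := aux_pastSA_le z hmeas k τ
      have hzint : Integrable (z k τ) μ :=
        ⟨(hmeas k τ).stronglyMeasurable.aestronglyMeasurable,
          HasFiniteIntegral.of_bounded (hbdd k τ (lt_of_lt_of_le hτ htH))⟩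
      refine (aux_condexp_clm hm (P τ) hzint).symm.trans ?_
      filter_upwards [hcond k τ (lt_of_lt_of_le hτ htH)] with ω hω
      show P τ ((μ[z k τ|pastSA z k τ]) ω) = 0
      rw [hω]
      exact map_zero _
    have hMb : ∀ᵐ ω ∂μ, ‖M k t ω‖ ≤ t * c := by
      have hall : ∀ᵐ ω ∂μ, ∀ τ, τ < t → ‖P τ (z k τ ω)‖ ≤ c := by
        rw [ae_all_iff]
        intro τ
        by_cases hτ : τ < t
        · filter_upwards [hPz τ hτ] with ω hω
          exact fun _ => hω
        · filter_upwards with ω hτ'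
          exact absurd hτ' hτ
      filter_upwards [hall] with ω hω
      calc ‖M k t ω‖ ≤ ∑ τ ∈ Finset.range t, ‖P τ (z k τ ω)‖ := norm_sum_le _ _
        _ ≤ ∑ τ ∈ Finset.range t, c :=
            Finset.sum_le_sum fun τ hτ => hω τ (Finset.mem_range.mp hτ)
        _ = t * c := by rw [Finset.sum_const, Finset.card_range]; simp
    have htail := aux_tail μ (M k t) (hMmeas k t) t H htH hHpos c R (t * c) hc hR hMb
      (fun lam hlam => aux_mgf μ z hmeas k t P lam c hlam hc hPz hcondP t le_rfl)
    refine le_trans htail (le_of_eq ?_)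
    congr 1
    have hR2 : R ^ 2 = c ^ 2 * (2 * H * Real.log (2 * H * K / δ)) := by
      rw [hR_def, hc_def, mul_pow, Real.sq_sqrt (by positivity)]
    have hH0 : (H:ℝ) ≠ 0 := by positivity
    have hK0 : (K:ℝ) ≠ 0 := by positivity
    have hexp : R ^ 2 / (2 * H * c ^ 2) = Real.log (2 * H * K / δ) := by
      rw [hR2]
      field_simp
    rw [hexp, Real.exp_neg, Real.exp_log (by positivity)]
    field_simp
  -- union bound
  set Bad : Set Ω := ⋃ p ∈ (Finset.univ ×ˢ Finset.Icc 1 H : Finset (Fin K × ℕ)),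
    {ω | R < ‖M p.1 p.2 ω‖} with hBad_def
  have hGc : {ω | ∀ k : Fin K, ∀ t ≤ H, ‖M k t ω‖ ≤ R}ᶜ ⊆ Bad := by
    intro ω hω
    simp only [Set.mem_compl_iff, Set.mem_setOf_eq, not_forall] at hω
    obtain ⟨k, t, htH', hgt⟩ := hω
    have hgt' : R < ‖M k t ω‖ := lt_of_not_ge hgt
    have ht1 : 1 ≤ t := by
      by_contra h
      have ht0 : t = 0 := by omega
      subst ht0
      have : M k 0 ω = 0 := by simp [hM_def]
      rw [this, norm_zero] at hgt'
      exact absurd hgt' (not_lt.mpr (le_of_lt hR))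
    exact Set.mem_iUnion₂.mpr ⟨(k, t),
      Finset.mem_product.mpr ⟨Finset.mem_univ k, Finset.mem_Icc.mpr ⟨ht1, htH'⟩⟩, hgt'⟩
  have hBadle : μ Bad ≤ ENNReal.ofReal δ := by
    calc μ Bad ≤ ∑ p ∈ (Finset.univ ×ˢ Finset.Icc 1 H : Finset (Fin K × ℕ)),
          μ {ω | R < ‖M p.1 p.2 ω‖} := measure_biUnion_finset_le _ _
      _ ≤ ∑ _p ∈ (Finset.univ ×ˢ Finset.Icc 1 H : Finset (Fin K × ℕ)),
          ENNReal.ofReal (δ / (H * K)) := by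
          apply Finset.sum_le_sum
          intro p hp
          obtain ⟨_, hp2⟩ := Finset.mem_product.mp hp
          obtain ⟨h1, h2⟩ := Finset.mem_Icc.mp hp2
          exact key p.1 p.2 h1 h2
      _ = (K * H : ℕ) * ENNReal.ofReal (δ / (H * K)) := by
          rw [Finset.sum_const, Finset.card_product, Finset.card_univ, Fintype.card_fin,
            Nat.card_Icc]
          simp only [Nat.add_sub_cancel, nsmul_eq_mul]
      _ = ENNReal.ofReal δ := by
          rw [← ENNReal.ofReal_natCast (K * H), ← ENNReal.ofReal_mul (by positivity)]
          congr 1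
          have hH0 : (H:ℝ) ≠ 0 := by positivity
          have hK0 : (K:ℝ) ≠ 0 := by positivity
          push_cast
          field_simp
  have hGmeas : MeasurableSet {ω | ∀ k : Fin K, ∀ t ≤ H, ‖M k t ω‖ ≤ R} := by
    have : {ω | ∀ k : Fin K, ∀ t ≤ H, ‖M k t ω‖ ≤ R} =
        ⋂ (k : Fin K), ⋂ (t : ℕ), ⋂ (_ : t ≤ H), {ω | ‖M k t ω‖ ≤ R} := by
      ext ω
      simp [Set.mem_iInter]
    rw [this]
    exact MeasurableSet.iInter fun k => MeasurableSet.iInter fun t =>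
      MeasurableSet.iInter fun _ => measurableSet_le (hMmeas k t).norm measurable_const
  have hcompl := measure_add_measure_compl (μ := μ) hGmeas
  have h6 : μ {ω | ∀ k : Fin K, ∀ t ≤ H, ‖M k t ω‖ ≤ R}ᶜ ≤ ENNReal.ofReal δ :=
    le_trans (measure_mono hGc) hBadle
  have h7 : (1 : ENNReal) ≤ μ {ω | ∀ k : Fin K, ∀ t ≤ H, ‖M k t ω‖ ≤ R} + ENNReal.ofReal δ := by
    rw [← measure_univ (μ := μ), ← hcompl]
    exact add_le_add le_rfl h6
  have h8 : ENNReal.ofReal (1 - δ) = 1 - ENNReal.ofReal δ := by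
    rw [ENNReal.ofReal_sub 1 (le_of_lt hδ0), ENNReal.ofReal_one]
  rw [h8]
  exact tsub_le_iff_right.mpr h7
end
end

section
/- (Noise covariance equals the Hessian under label noise.) Let C ≥ 2 be an integer, p ∈ (0,1), N ≥ 1. For each i ∈ {1,…,N} let f^i = (f^i_1, …, f^i_C) : ℝ^d → ℝ^C be twice continuously differentiable with f^i_j(θ) > 0 for all j and Σ_{j=1}^C f^i_j(θ) = 1 for all θ, and fix a label y_i ∈ {1,…,C}. Define the per-sample loss ℓ_i(θ; j) := −log f^i_j(θ), let ŷ_i be a random label with P(ŷ_i = y_i) = 1 − p and P(ŷ_i = j) = p/(C−1) for each j ≠ y_i, and set L(θ) := (1/N)Σ_{i=1}^N E[ℓ_i(θ; ŷ_i)]. Suppose θ ∈ ℝ^d satisfies f^i_{y_i}(θ) = 1 − p and f^i_j(θ) = p/(C−1) for every i and every j ≠ y_i. Then ∇L(θ) = 0 and the noise covariance Σ(θ) := (1/N)Σ_{i=1}^N E[(∇_θ ℓ_i(θ; ŷ_i) − ∇L(θ))(∇_θ ℓ_i(θ; ŷ_i) − ∇L(θ))^⊤] equals the Hessian: Σ(θ)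 = ∇²L(θ). -/
open scoped RealInnerProductSpace

noncomputable section

/-- The probability that the noisy label equals `j` when the true label is `yi`:
`1 − p` for the true label and `p/(C−1)` for each of the other `C − 1` labels. -/
def labelProb {C : ℕ} (p : ℝ) (yi j : Fin C) : ℝ :=
  if j = yi then 1 - p else p / ((C : ℝ) - 1)

/-- The label-noise training loss `L(θ) = (1/N) ∑ᵢ E[ℓᵢ(θ; ŷᵢ)]`, where
`ℓᵢ(θ; j) = −log fᵢⱼ(θ)` and `ŷᵢ` has distribution `labelProb p (y i)`. -/
noncomputable def labelNoiseLoss {d C N : ℕ}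
    (f : Fin N → Fin C → EuclideanSpace ℝ (Fin d) → ℝ) (y : Fin N → Fin C) (p : ℝ)
    (θ : EuclideanSpace ℝ (Fin d)) : ℝ :=
  (N : ℝ)⁻¹ * ∑ i : Fin N, ∑ j : Fin C, labelProb p (y i) j * (-Real.log (f i j θ))

set_option maxHeartbeats 1000000 in
/-- Noise covariance equals the Hessian under label noise.
For a `C`-class model with positive probabilities summing to one, at any point `θ` where
the model outputs exactly match the noisy-label distribution
(`fᵢ_{yᵢ}(θ) = 1 − p`, `fᵢⱼ(θ) = p/(C−1)` for `j ≠ yᵢ`), the gradient of the label-noise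
loss vanishes and the label-noise gradient covariance
`Σ(θ) = (1/N)∑ᵢ E[(∇ℓᵢ(θ;ŷᵢ) − ∇L(θ))(∇ℓᵢ(θ;ŷᵢ) − ∇L(θ))ᵀ]` equals the Hessian `∇²L(θ)`,
both viewed as bilinear forms. -/
theorem statement16 {d C N : ℕ} (hC : 2 ≤ C) (hN : 1 ≤ N)
    (p : ℝ) (hp0 : 0 < p) (hp1 : p < 1)
    (f : Fin N → Fin C → EuclideanSpace ℝ (Fin d) → ℝ) (y : Fin N → Fin C)
    (hf : ∀ i j, ContDiff ℝ 2 (f i j))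
    (hfpos : ∀ i j θ, 0 < f i j θ)
    (hfsum : ∀ i θ, ∑ j : Fin C, f i j θ = 1)
    (θ : EuclideanSpace ℝ (Fin d))
    (hθy : ∀ i, f i (y i) θ = 1 - p)
    (hθj : ∀ i j, j ≠ y i → f i j θ = p / ((C : ℝ) - 1)) :
    gradient (labelNoiseLoss f y p) θ = 0 ∧
      ∀ u v : EuclideanSpace ℝ (Fin d),
        (N : ℝ)⁻¹ * ∑ i : Fin N, ∑ j : Fin C, labelProb p (y i) j *
            (⟪gradient (fun x => -Real.log (f i j x)) θ -
                gradient (labelNoiseLoss f y p) θ, u⟫ *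
              ⟪gradient (fun x => -Real.log (f i j x)) θ -
                gradient (labelNoiseLoss f y p) θ, v⟫) =
          iteratedFDeriv ℝ 2 (labelNoiseLoss f y p) θ ![u, v] := by
  -- basic differentiability facts
  have hfd : ∀ i j, Differentiable ℝ (f i j) := fun i j =>
    (hf i j).differentiable (by norm_num)
  have hfd2 : ∀ i j, Differentiable ℝ (fderiv ℝ (f i j)) := fun i j =>
    ((hf i j).fderiv_right (m := 1) (by norm_num)).differentiable (by norm_num)
  have hne : ∀ i j (x : EuclideanSpace ℝ (Fin d)), f i j x ≠ 0 := fun i j x => (hfpos i j x).ne'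
  -- derivative of each -log f
  have hg : ∀ i j (x : EuclideanSpace ℝ (Fin d)),
      HasFDerivAt (fun x => -Real.log (f i j x)) (-((f i j x)⁻¹ • fderiv ℝ (f i j) x)) x :=
    fun i j x => ((Real.hasDerivAt_log (hne i j x)).comp_hasFDerivAt x
      (hfd i j x).hasFDerivAt).neg
  -- label probabilities match model outputs at θ
  have hlp : ∀ i j, labelProb p (y i) j = f i j θ := by
    intro i j
    unfold labelProb
    split
    · next h => rw [h, hθy]
    · next h => rw [hθj i j h]
  -- first derivatives sum to zero
  have hsum1 : ∀ i (x : EuclideanSpace ℝ (Fin d)), ∑ j, fderiv ℝ (f i j) x = 0 := by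
    intro i x
    have h1 : fderiv ℝ (fun x => ∑ j, f i j x) x = ∑ j, fderiv ℝ (f i j) x :=
      fderiv_fun_sum (fun j _ => hfd i j x)
    rw [← h1, show (fun x => ∑ j, f i j x) = (fun _ => (1 : ℝ)) from funext (hfsum i),
      fderiv_const_apply]
  -- second derivatives sum to zero
  have hsum2 : ∀ i, ∑ j, fderiv ℝ (fderiv ℝ (f i j)) θ = 0 := by
    intro i
    have h1 : fderiv ℝ (fun x => ∑ j, fderiv ℝ (f i j) x) θ
        = ∑ j, fderiv ℝ (fderiv ℝ (f i j)) θ :=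
      fderiv_fun_sum (fun j _ => hfd2 i j θ)
    rw [← h1, show (fun x : EuclideanSpace ℝ (Fin d) => ∑ j, fderiv ℝ (f i j) x)
        = (fun _ => (0 : EuclideanSpace ℝ (Fin d) →L[ℝ] ℝ)) from funext (hsum1 i),
      fderiv_const_apply]
  -- derivative of L everywhere
  have hL : ∀ x, HasFDerivAt (labelNoiseLoss f y p)
      ((N : ℝ)⁻¹ • ∑ i, ∑ j, labelProb p (y i) j • (-((f i j x)⁻¹ • fderiv ℝ (f i j) x))) x := by
    intro x
    have h1 : HasFDerivAt (fun x => ∑ i : Fin N, ∑ j : Fin C,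
        labelProb p (y i) j * (-Real.log (f i j x)))
        (∑ i, ∑ j, labelProb p (y i) j • (-((f i j x)⁻¹ • fderiv ℝ (f i j) x))) x :=
      HasFDerivAt.fun_sum (fun i _ => HasFDerivAt.fun_sum (fun j _ => (hg i j x).const_mul _))
    exact h1.const_mul _
  -- fderiv of L at θ vanishes
  have hterm : ∀ i j, labelProb p (y i) j • (-((f i j θ)⁻¹ • fderiv ℝ (f i j) θ))
      = -(fderiv ℝ (f i j) θ) := by
    intro i j
    rw [hlp i j, smul_neg, smul_smul, mul_inv_cancel₀ (hne i j θ), one_smul]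
  have hfLθ : fderiv ℝ (labelNoiseLoss f y p) θ = 0 := by
    rw [(hL θ).fderiv]
    have : ∀ i : Fin N, ∑ j, labelProb p (y i) j • (-((f i j θ)⁻¹ • fderiv ℝ (f i j) θ))
        = 0 := by
      intro i
      rw [Finset.sum_congr rfl fun j _ => hterm i j, Finset.sum_neg_distrib,
        hsum1 i θ, neg_zero]
    simp only [this, Finset.sum_const_zero, smul_zero]
  have hgrad0 : gradient (labelNoiseLoss f y p) θ = 0 := by
    rw [gradient, hfLθ, map_zero]
  refine ⟨hgrad0, ?_⟩
  -- second derivative setup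
  have hD : ∀ i j, HasFDerivAt (fun x => -((f i j x)⁻¹ • fderiv ℝ (f i j) x))
      (-((f i j θ)⁻¹ • fderiv ℝ (fderiv ℝ (f i j)) θ +
        ((-((f i j θ) ^ 2)⁻¹) • fderiv ℝ (f i j) θ).smulRight (fderiv ℝ (f i j) θ))) θ := by
    intro i j
    have hh : HasFDerivAt (fun x => (f i j x)⁻¹)
        ((-((f i j θ) ^ 2)⁻¹) • fderiv ℝ (f i j) θ) θ :=
      (hasDerivAt_inv (hne i j θ)).comp_hasFDerivAt θ (hfd i j θ).hasFDerivAt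
    exact (hh.smul (hfd2 i j θ).hasFDerivAt).neg
  have hfe : (fun x => fderiv ℝ (labelNoiseLoss f y p) x)
      = fun x => (N : ℝ)⁻¹ • ∑ i, ∑ j, labelProb p (y i) j •
          (-((f i j x)⁻¹ • fderiv ℝ (f i j) x)) :=
    funext fun x => (hL x).fderiv
  have hL2 : HasFDerivAt (fun x => fderiv ℝ (labelNoiseLoss f y p) x)
      ((N : ℝ)⁻¹ • ∑ i, ∑ j, labelProb p (y i) j •
        (-((f i j θ)⁻¹ • fderiv ℝ (fderiv ℝ (f i j)) θ +
          ((-((f i j θ) ^ 2)⁻¹) • fderiv ℝ (f i j) θ).smulRight (fderiv ℝ (f i j) θ)))) θ := by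
    rw [hfe]
    exact (HasFDerivAt.fun_sum (fun i _ => HasFDerivAt.fun_sum
      (fun j _ => (hD i j).fun_const_smul _))).fun_const_smul _
  intro u v
  rw [iteratedFDeriv_two_apply, show (![u, v] : Fin 2 → EuclideanSpace ℝ (Fin d)) 0 = u from rfl,
    show (![u, v] : Fin 2 → EuclideanSpace ℝ (Fin d)) 1 = v from rfl, hL2.fderiv]
  -- gradients of the per-sample losses
  have hgradg : ∀ i j (w : EuclideanSpace ℝ (Fin d)),
      ⟪gradient (fun x => -Real.log (f i j x)) θ, w⟫
        = -((f i j θ)⁻¹ * fderiv ℝ (f i j) θ w) := by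
    intro i j w
    rw [gradient, (hg i j θ).fderiv, InnerProductSpace.toDual_symm_apply]
    simp
  simp only [hgrad0, sub_zero, hgradg]
  -- evaluate the RHS continuous linear maps
  simp only [ContinuousLinearMap.smul_apply, ContinuousLinearMap.coe_sum',
    Finset.sum_apply, ContinuousLinearMap.neg_apply, ContinuousLinearMap.add_apply,
    ContinuousLinearMap.smulRight_apply, smul_eq_mul]
  congr 1
  refine Finset.sum_congr rfl fun i _ => ?_
  have key : ∀ j : Fin C, labelProb p (y i) j *
        (-((f i j θ)⁻¹ * fderiv ℝ (f i j) θ u) * -((f i j θ)⁻¹ * fderiv ℝ (f i j) θ v))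
      = labelProb p (y i) j *
          -((f i j θ)⁻¹ * fderiv ℝ (fderiv ℝ (f i j)) θ u v +
            -((f i j θ) ^ 2)⁻¹ * fderiv ℝ (f i j) θ u * fderiv ℝ (f i j) θ v)
        + fderiv ℝ (fderiv ℝ (f i j)) θ u v := by
    intro j
    rw [hlp i j]
    have ha := hne i j θ
    field_simp
    ring
  rw [Finset.sum_congr rfl fun j _ => key j, Finset.sum_add_distrib]
  have : ∑ j, fderiv ℝ (fderiv ℝ (f i j)) θ u v = 0 := by
    rw [← ContinuousLinearMap.sum_apply, ← ContinuousLinearMap.sum_apply, hsum2 i]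
    simp
  rw [this, add_zero]
end
end

section
/- (Uniform bound on products of gradient-descent linearization matrices.) Let L : ℝ^d → ℝ be three times continuously differentiable with ‖∇²L(θ)‖ ≤ ρ₂ and ‖∇³L(θ)‖ ≤ ρ₃ for all θ ∈ ℝ^d, and let S, μ, L*, ε₀ < ε₁ < ε₂ < ε₃, U = S^{ε₃} satisfy the minimizer-set assumption with the stated radius inequalities. Let 0 < η ≤ 1/ρ₂, let H ∈ ℕ be arbitrary, and let ũ_{t+1} = ũ_t − η∇L(ũ_t) be gradient-descent iterates with dist(ũ_0, S) < ε₀. Then there exist constants C > 0 and η₀ > 0, depending only on μ, ρ₂, ρ₃ and ε₀ and independent of η, H (and hence of α = Hη), such that for all 0 < η ≤ η₀ and all 0 ≤ τ < t ≤ H: ‖∏_{l=τ+1}^{t−1} (I − η∇²L(ũ_l))‖ ≤ C. -/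
set_option maxHeartbeats 1000000

open scoped RealInnerProductSpace
open InnerProductSpace Metric Filter
noncomputable section

section Aux

variable {E : Type*} [NormedAddCommGroup E] [InnerProductSpace ℝ E] [CompleteSpace E]

/-- The real version of `InnerProductSpace.toDual`, as a genuinely `ℝ`-linear isometry equiv. -/
def toDualR (E : Type*) [NormedAddCommGroup E] [InnerProductSpace ℝ E] [CompleteSpace E] :
    E ≃ₗᵢ[ℝ] StrongDual ℝ E where
  toLinearEquiv :=
    { toFun := fun x => toDual ℝ E x
      map_add' := fun x y => by simp
      map_smul' := fun c x => by simp
      invFun := fun y => (toDual ℝ E).symm y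
      left_inv := fun x => by simp
      right_inv := fun y => by simp }
  norm_map' := fun x => (toDual ℝ E).norm_map x

@[simp] lemma toDualR_symm_apply (y : StrongDual ℝ E) :
    (toDualR E).symm y = (toDual ℝ E).symm y := rfl

lemma gradient_eq_toDualR (L : E → ℝ) :
    gradient L = ⇑(toDualR E).symm ∘ (fderiv ℝ L) := rfl

variable {L : E → ℝ}

lemma inner_gradient_eq (x v : E) : ⟪gradient L x, v⟫ = fderiv ℝ L x v :=
  InnerProductSpace.toDual_symm_apply

lemma gradient_contDiff (hL : ContDiff ℝ 3 L) : ContDiff ℝ 2 (gradient L) := by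
  rw [gradient_eq_toDualR]
  exact (toDualR E).symm.contDiff.comp (hL.fderiv_right (by norm_num))

lemma fderiv_gradient_eq (x : E) :
    fderiv ℝ (gradient L) x =
      ((toDualR E).symm : (StrongDual ℝ E) →L[ℝ] E).comp
        (fderiv ℝ (fderiv ℝ L) x) := by
  rw [gradient_eq_toDualR, LinearIsometryEquiv.comp_fderiv]

lemma hessian_symm (hL : ContDiff ℝ 3 L) (x v w : E) :
    ⟪fderiv ℝ (gradient L) x v, w⟫ = ⟪v, fderiv ℝ (gradient L) x w⟫ := by
  have hsymm : IsSymmSndFDerivAt ℝ L x :=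
    hL.contDiffAt.isSymmSndFDerivAt (by norm_num)
  rw [fderiv_gradient_eq]
  change ⟪(toDual ℝ E).symm (fderiv ℝ (fderiv ℝ L) x v), w⟫ =
    ⟪v, (toDual ℝ E).symm (fderiv ℝ (fderiv ℝ L) x w)⟫
  rw [InnerProductSpace.toDual_symm_apply, real_inner_comm,
    InnerProductSpace.toDual_symm_apply]
  exact hsymm v w

lemma hessian_lipschitz (hL : ContDiff ℝ 3 L) {ρ₃ : ℝ}
    (h3 : ∀ θ, ‖iteratedFDeriv ℝ 3 L θ‖ ≤ ρ₃) (x y : E) :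
    ‖fderiv ℝ (gradient L) x - fderiv ℝ (gradient L) y‖ ≤ ρ₃ * ‖x - y‖ := by
  have hf'' : ContDiff ℝ 1 (fderiv ℝ (fderiv ℝ L)) :=
    (hL.fderiv_right (m := 2) (by norm_num)).fderiv_right (m := 1) (by norm_num)
  have hbound : ∀ z : E, ‖iteratedFDeriv ℝ 1 (fderiv ℝ (fderiv ℝ L)) z‖ ≤ ρ₃ := by
    intro z
    have e2 := norm_iteratedFDeriv_fderiv (f := fderiv ℝ L) (n := 1) (x := z) (𝕜 := ℝ)
    have e3 := norm_iteratedFDeriv_fderiv (f := L) (n := 2) (x := z) (𝕜 := ℝ)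
    calc ‖iteratedFDeriv ℝ 1 (fderiv ℝ (fderiv ℝ L)) z‖
        = ‖iteratedFDeriv ℝ 2 (fderiv ℝ L) z‖ := e2
      _ = ‖iteratedFDeriv ℝ 3 L z‖ := e3
      _ ≤ ρ₃ := h3 z
  have hlip : ‖fderiv ℝ (fderiv ℝ L) x - fderiv ℝ (fderiv ℝ L) y‖ ≤ ρ₃ * ‖x - y‖ := by
    have := Convex.norm_image_sub_le_of_norm_fderiv_le
      (f := fderiv ℝ (fderiv ℝ L)) (s := Set.univ)
      (fun z _ => (hf''.differentiable (by norm_num)).differentiableAt)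
      (fun z _ => by
        have e1 := norm_iteratedFDeriv_fderiv (f := fderiv ℝ (fderiv ℝ L)) (n := 0) (x := z) (𝕜 := ℝ)
        rw [norm_iteratedFDeriv_zero] at e1
        rw [e1]; exact hbound z) convex_univ (Set.mem_univ y) (Set.mem_univ x)
    simpa using this
  rw [fderiv_gradient_eq, fderiv_gradient_eq, ← ContinuousLinearMap.comp_sub]
  refine le_trans (ContinuousLinearMap.opNorm_le_bound _
    (norm_nonneg (fderiv ℝ (fderiv ℝ L) x - fderiv ℝ (fderiv ℝ L) y)) ?_) hlip
  intro v
  rw [ContinuousLinearMap.comp_apply]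
  have hcoe : ∀ z : StrongDual ℝ E,
      (((toDualR E).symm : (StrongDual ℝ E) →L[ℝ] E) z) = (toDualR E).symm z := fun z => rfl
  rw [hcoe, LinearIsometryEquiv.norm_map]
  exact ContinuousLinearMap.le_opNorm _ v

lemma gradient_lipschitz (hL : ContDiff ℝ 3 L) {ρ₂ : ℝ}
    (h2 : ∀ θ, ‖fderiv ℝ (gradient L) θ‖ ≤ ρ₂) (x y : E) :
    ‖gradient L x - gradient L y‖ ≤ ρ₂ * ‖x - y‖ := by
  have hg : Differentiable ℝ (gradient L) :=
    (gradient_contDiff hL).differentiable (by norm_num)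
  have := Convex.norm_image_sub_le_of_norm_fderiv_le
    (f := gradient L) (s := Set.univ)
    (fun z _ => hg.differentiableAt) (fun z _ => h2 z)
    convex_univ (Set.mem_univ y) (Set.mem_univ x)
  simpa using this

lemma psd_cauchy_schwarz (A : E →L[ℝ] E)
    (hsym : ∀ x y : E, ⟪A x, y⟫ = ⟪x, A y⟫) (hpos : ∀ x : E, 0 ≤ ⟪x, A x⟫)
    (v : E) : ‖A v‖ ^ 2 ≤ ‖A‖ * ⟪v, A v⟫ := by
  set a := ⟪v, A v⟫ with ha
  set b := (‖A v‖ : ℝ) ^ 2 with hb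
  set c := ⟪A v, A (A v)⟫ with hc
  have ha0 : 0 ≤ a := hpos v
  have hc0 : 0 ≤ c := hpos (A v)
  have hbval : b = ⟪v, A (A v)⟫ := by
    rw [hb, ← real_inner_self_eq_norm_sq, hsym]
  have hAvAv : ⟪A v, A v⟫ = b := by rw [hb, real_inner_self_eq_norm_sq]
  have hb0 : 0 ≤ b := sq_nonneg _
  have hCS : b ^ 2 ≤ a * c := by
    have key : ∀ t : ℝ, 0 ≤ a - 2 * t * b + t ^ 2 * c := by
      intro t
      have h0 := hpos (v - t • A v)
      have hexp : ⟪v - t • A v, A (v - t • A v)⟫ = a - 2 * t * b + t ^ 2 * c := by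
        rw [map_sub, map_smul, inner_sub_left, inner_sub_right, inner_sub_right,
          real_inner_smul_left, real_inner_smul_left, real_inner_smul_right,
          real_inner_smul_right, ← hbval, hAvAv, ← ha, ← hc]
        ring
      rw [hexp] at h0
      exact h0
    rcases eq_or_lt_of_le hc0 with hc' | hc'
    · have hbz : b = 0 := by
        by_contra hbne
        have hbpos : 0 < b := lt_of_le_of_ne hb0 (Ne.symm hbne)
        have hk := key ((a + 1) / (2 * b))
        rw [← hc'] at hk
        simp only [mul_zero, add_zero] at hk
        have h3 : 2 * ((a + 1) / (2 * b)) * b = a + 1 := by field_simp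
        linarith
      rw [hbz]
      nlinarith
    · have hk := key (b / c)
      have h2 : a - 2 * (b / c) * b + (b / c) ^ 2 * c = a - b ^ 2 / c := by
        field_simp
        ring
      rw [h2] at hk
      have h4 : b ^ 2 / c ≤ a := by linarith
      have := (div_le_iff₀ hc').mp h4
      linarith [this]
  have hcb : c ≤ ‖A‖ * b := by
    calc c ≤ ‖A v‖ * ‖A (A v)‖ := real_inner_le_norm _ _
      _ ≤ ‖A v‖ * (‖A‖ * ‖A v‖) := by
          apply mul_le_mul_of_nonneg_left (A.le_opNorm _) (norm_nonneg _)
      _ = ‖A‖ * b := by rw [hb]; ring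
  have hAn : 0 ≤ ‖A‖ := norm_nonneg _
  rcases eq_or_lt_of_le hb0 with hb' | hb'
  · rw [← hb']
    positivity
  · have h5 : b ^ 2 ≤ ‖A‖ * a * b := by
      calc b ^ 2 ≤ a * c := hCS
        _ ≤ a * (‖A‖ * b) := mul_le_mul_of_nonneg_left hcb ha0
        _ = ‖A‖ * a * b := by ring
    nlinarith

lemma contraction_of_psd (A : E →L[ℝ] E)
    (hsym : ∀ x y : E, ⟪A x, y⟫ = ⟪x, A y⟫) (hpos : ∀ x : E, 0 ≤ ⟪x, A x⟫)
    (η : ℝ) (hη : 0 ≤ η) (hηA : η * ‖A‖ ≤ 2) :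
    ‖(1 : E →L[ℝ] E) - η • A‖ ≤ 1 := by
  apply ContinuousLinearMap.opNorm_le_bound _ zero_le_one
  intro v
  rw [one_mul]
  have hsq : ‖((1 : E →L[ℝ] E) - η • A) v‖ ^ 2 ≤ ‖v‖ ^ 2 := by
    have happ : ((1 : E →L[ℝ] E) - η • A) v = v - η • A v := by
      simp [ContinuousLinearMap.sub_apply, ContinuousLinearMap.smul_apply]
    rw [happ, norm_sub_sq_real]
    have h1 : ⟪v, η • A v⟫ = η * ⟪v, A v⟫ := real_inner_smul_right _ _ _
    have h2 : ‖η • A v‖ ^ 2 = η ^ 2 * ‖A v‖ ^ 2 := by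
      rw [norm_smul]
      simp [mul_pow, Real.norm_eq_abs, sq_abs]
    rw [h1, h2]
    have h3 : ‖A v‖ ^ 2 ≤ ‖A‖ * ⟪v, A v⟫ := psd_cauchy_schwarz A hsym hpos v
    have h4 : η ^ 2 * ‖A v‖ ^ 2 ≤ η * (η * ‖A‖) * ⟪v, A v⟫ := by
      have := mul_le_mul_of_nonneg_left h3 (by positivity : (0:ℝ) ≤ η ^ 2)
      nlinarith
    nlinarith [hpos v, mul_le_mul_of_nonneg_right hηA (hpos v), sq_nonneg η]
  have := Real.sqrt_le_sqrt hsq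
  rwa [Real.sqrt_sq (norm_nonneg _), Real.sqrt_sq (norm_nonneg _)] at this

lemma hasDerivAt_line (hL : Differentiable ℝ L) (x v : E) (s : ℝ) :
    HasDerivAt (fun s : ℝ => L (x + s • v)) ⟪gradient L (x + s • v), v⟫ s := by
  have hγ : HasDerivAt (fun s : ℝ => x + s • v) v s := by
    simpa using ((hasDerivAt_id s).smul_const v).const_add x
  have hc := (hL.differentiableAt.hasFDerivAt
    (x := x + s • v)).comp_hasDerivAt s hγ
  have : fderiv ℝ L (x + s • v) v = ⟪gradient L (x + s • v), v⟫ :=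
    (inner_gradient_eq _ _).symm
  rw [← this]
  exact hc

lemma taylor_upper (hL : Differentiable ℝ L) {ρ₂ : ℝ} (hρ₂ : 0 ≤ ρ₂)
    (hlip : ∀ x y : E, ‖gradient L x - gradient L y‖ ≤ ρ₂ * ‖x - y‖) (x v : E) :
    L (x + v) ≤ L x + ⟪gradient L x, v⟫ + ρ₂ * ‖v‖ ^ 2 := by
  set F : ℝ → ℝ := fun s => L (x + s • v) - s * ⟪gradient L x, v⟫ with hF
  have hFd : ∀ s : ℝ, HasDerivAt F (⟪gradient L (x + s • v), v⟫ - ⟪gradient L x, v⟫) s := by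
    intro s
    have hid : HasDerivAt (fun s : ℝ => s * ⟪gradient L x, v⟫) ⟪gradient L x, v⟫ s := by
      simpa using (hasDerivAt_id s).mul_const ⟪gradient L x, v⟫
    exact (hasDerivAt_line hL x v s).sub hid
  have hbound : ∀ s ∈ Set.Icc (0 : ℝ) 1,
      ‖⟪gradient L (x + s • v), v⟫ - ⟪gradient L x, v⟫‖ ≤ ρ₂ * ‖v‖ ^ 2 := by
    intro s hs
    have h1 : ⟪gradient L (x + s • v), v⟫ - ⟪gradient L x, v⟫
        = ⟪gradient L (x + s • v) - gradient L x, v⟫ := by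
      rw [inner_sub_left]
    rw [h1]
    calc ‖⟪gradient L (x + s • v) - gradient L x, v⟫‖
        ≤ ‖gradient L (x + s • v) - gradient L x‖ * ‖v‖ := by
          rw [Real.norm_eq_abs]; exact abs_real_inner_le_norm _ _
      _ ≤ (ρ₂ * ‖x + s • v - x‖) * ‖v‖ := by
          apply mul_le_mul_of_nonneg_right (hlip _ _) (norm_nonneg _)
      _ = ρ₂ * (s * ‖v‖) * ‖v‖ := by
          congr 2
          rw [add_sub_cancel_left, norm_smul, Real.norm_eq_abs, abs_of_nonneg hs.1]
      _ ≤ ρ₂ * ‖v‖ ^ 2 := by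
          have h5 : s * ‖v‖ * ‖v‖ ≤ ‖v‖ ^ 2 := by
            nlinarith [sq_nonneg ‖v‖, norm_nonneg v, hs.1, hs.2]
          nlinarith [mul_le_mul_of_nonneg_left h5 hρ₂]
  have hmv := Convex.norm_image_sub_le_of_norm_hasDerivWithin_le
    (f := F) (f' := fun s => ⟪gradient L (x + s • v), v⟫ - ⟪gradient L x, v⟫)
    (fun s _ => (hFd s).hasDerivWithinAt) (fun s hs => hbound s hs)
    (convex_Icc 0 1) (Set.left_mem_Icc.2 zero_le_one) (Set.right_mem_Icc.2 zero_le_one)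
  have hF1 : F 1 = L (x + v) - ⟪gradient L x, v⟫ := by rw [hF]; simp
  have hF0 : F 0 = L x := by rw [hF]; simp
  rw [hF1, hF0] at hmv
  have := le_trans (le_abs_self _) (by simpa using hmv)
  linarith [inner_gradient_eq (L := L) x v]

lemma hessian_psd_at_min (hL : ContDiff ℝ 3 L)
    (hg : Differentiable ℝ (gradient L)) (p : E) {ε : ℝ} (hε : 0 < ε)
    (hmin : ∀ z : E, ‖z - p‖ < ε → L p ≤ L z) (hgp : gradient L p = 0) (v : E) :
    0 ≤ ⟪v, fderiv ℝ (gradient L) p v⟫ := by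
  by_contra hneg
  push_neg at hneg
  set c : ℝ := -⟪v, fderiv ℝ (gradient L) p v⟫ with hc
  have hc0 : 0 < c := by rw [hc]; linarith
  have hLd : Differentiable ℝ L := (hL.differentiable (by norm_num))
  set φ : ℝ → ℝ := fun s => ⟪v, gradient L (p + s • v)⟫ with hφ
  have hγ : ∀ s : ℝ, HasDerivAt (fun s : ℝ => p + s • v) v s := by
    intro s
    simpa using ((hasDerivAt_id s).smul_const v).const_add p
  have hφd : HasDerivAt φ (-c) 0 := by
    have h1 : HasDerivAt (fun s : ℝ => gradient L (p + s • v))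
        (fderiv ℝ (gradient L) (p + (0:ℝ) • v) v) 0 :=
      (hg.differentiableAt.hasFDerivAt).comp_hasDerivAt 0 (hγ 0)
    have h2 := (innerSL ℝ v).hasFDerivAt.comp_hasDerivAt 0 h1
    simp only [zero_smul, add_zero] at h1 h2
    have : (innerSL ℝ v) (fderiv ℝ (gradient L) p v) = -c := by
      simp [hc, innerSL_apply_apply]
    rw [this] at h2
    exact h2
  have hφ0 : φ 0 = 0 := by simp only [hφ, zero_smul, add_zero, hgp, inner_zero_right]
  have hslope : Filter.Tendsto (fun s : ℝ => φ s / s) (nhdsWithin 0 (Set.Ioi 0)) (nhds (-c)) := by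
    have := hasDerivAt_iff_tendsto_slope.mp hφd
    have hmono : nhdsWithin (0:ℝ) (Set.Ioi 0) ≤ nhdsWithin 0 {(0:ℝ)}ᶜ :=
      nhdsWithin_mono 0 (fun x hx => ne_of_gt hx)
    have h2 := this.mono_left hmono
    apply h2.congr'
    filter_upwards [self_mem_nhdsWithin] with s hs
    rw [slope_def_field]
    rw [hφ0]
    rw [sub_zero, sub_zero]
  have hev : ∀ᶠ s in nhdsWithin (0:ℝ) (Set.Ioi 0), φ s / s < -c/2 := by
    apply hslope.eventually_lt_const
    linarith
  rw [Filter.eventually_iff, mem_nhdsGT_iff_exists_Ioo_subset] at hev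
  obtain ⟨u, hu, hsub⟩ := hev
  have hu0 : 0 < u := hu
  set s₀ : ℝ := (1/2) * min u (ε / (‖v‖ + 1)) with hs₀
  have hvpos : 0 < ‖v‖ + 1 := by positivity
  have hs₀pos : 0 < s₀ := by
    rw [hs₀]
    have : 0 < ε / (‖v‖ + 1) := by positivity
    have := lt_min hu0 this
    positivity
  have hs₀u : s₀ < u := by
    rw [hs₀]
    have h1 : min u (ε / (‖v‖ + 1)) ≤ u := min_le_left _ _
    linarith
  have hs₀ε : s₀ * ‖v‖ < ε := by
    have h1 : min u (ε / (‖v‖ + 1)) ≤ ε / (‖v‖ + 1) := min_le_right _ _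
    have h2 : s₀ ≤ (1/2) * (ε / (‖v‖ + 1)) := by
      rw [hs₀]; nlinarith
    have h3 : s₀ * ‖v‖ ≤ (1/2) * (ε / (‖v‖ + 1)) * ‖v‖ := by
      apply mul_le_mul_of_nonneg_right h2 (norm_nonneg _)
    have h4 : (ε / (‖v‖ + 1)) * ‖v‖ < ε := by
      rw [div_mul_eq_mul_div, div_lt_iff₀ hvpos]
      nlinarith [norm_nonneg v]
    nlinarith [norm_nonneg v, div_pos hε hvpos]
  set ψ : ℝ → ℝ := fun s => L (p + s • v) with hψ
  have hψd : ∀ s : ℝ, HasDerivAt ψ (φ s) s := by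
    intro s
    have h2 := (hLd.differentiableAt.hasFDerivAt (x := p + s • v)).comp_hasDerivAt s (hγ s)
    have h3 : fderiv ℝ L (p + s • v) v = φ s := by
      rw [← inner_gradient_eq]
      rw [real_inner_comm]
    rw [h3] at h2
    exact h2
  have hanti : StrictAntiOn ψ (Set.Icc 0 s₀) := by
    apply strictAntiOn_of_deriv_neg (convex_Icc 0 s₀)
    · exact Continuous.continuousOn (by
        apply Continuous.comp (hL.continuous)
        exact (continuous_const.add (continuous_id.smul continuous_const)))
    · intro s hs
      rw [interior_Icc] at hs
      have hs1 : 0 < s := hs.1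
      have hs2 : s < s₀ := hs.2
      have hmem : s ∈ Set.Ioo 0 u := ⟨hs1, lt_trans hs2 hs₀u⟩
      have := hsub hmem
      have hφs : φ s < -c/2 * s := by
        rw [Set.mem_setOf_eq] at this
        have := (div_lt_iff₀ hs1).mp this
        linarith [this]
      rw [(hψd s).deriv]
      nlinarith
  have hlt : ψ s₀ < ψ 0 := by
    apply hanti (Set.left_mem_Icc.2 (le_of_lt hs₀pos))
      (Set.right_mem_Icc.2 (le_of_lt hs₀pos)) hs₀pos
  have hψ0 : ψ 0 = L p := by simp [hψ]
  have hnear : ‖(p + s₀ • v) - p‖ < ε := by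
    rw [add_sub_cancel_left, norm_smul, Real.norm_eq_abs, abs_of_pos hs₀pos]
    exact hs₀ε
  have := hmin (p + s₀ • v) hnear
  rw [hψ0] at hlt
  have : L p ≤ ψ s₀ := this
  linarith

end Aux

lemma clmProd_self {d : ℕ} (A : ℕ → (EuclideanSpace ℝ (Fin d) →L[ℝ] EuclideanSpace ℝ (Fin d)))
    (a : ℕ) : clmProd A a a = 1 := by
  simp [clmProd]

lemma clmProd_succ {d : ℕ} (A : ℕ → (EuclideanSpace ℝ (Fin d) →L[ℝ] EuclideanSpace ℝ (Fin d)))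
    (a b : ℕ) (h : a ≤ b) : clmProd A a (b + 1) = A b * clmProd A a b := by
  have h1 : b + 1 - a = (b - a) + 1 := by omega
  rw [clmProd, clmProd, h1, List.range_succ_eq_map]
  simp only [List.map_cons, List.map_map, List.prod_cons]
  have h2 : b + 1 - 1 - 0 = b := by omega
  rw [h2]
  congr 1
  congr 1
  apply List.map_congr_left
  intro i _
  simp only [Function.comp_apply]
  congr 1
  omega

lemma norm_clmProd_le {d : ℕ} (A : ℕ → (EuclideanSpace ℝ (Fin d) →L[ℝ] EuclideanSpace ℝ (Fin d)))
    (c : ℕ → ℝ) (hA : ∀ l, ‖A l‖ ≤ Real.exp (c l)) (a : ℕ) :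
    ∀ n : ℕ, ‖clmProd A a (a + n)‖ ≤ Real.exp (∑ i ∈ Finset.range n, c (a + i)) := by
  intro n
  induction n with
  | zero =>
      rw [Nat.add_zero, clmProd_self]
      have h1 : ‖(1 : EuclideanSpace ℝ (Fin d) →L[ℝ] EuclideanSpace ℝ (Fin d))‖ ≤ 1 :=
        ContinuousLinearMap.norm_id_le
      rw [Finset.range_zero, Finset.sum_empty, Real.exp_zero]
      exact h1
  | succ n ih =>
      have h1 : a + (n + 1) = (a + n) + 1 := rfl
      rw [h1, clmProd_succ A a (a + n) (Nat.le_add_right a n)]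
      calc ‖A (a + n) * clmProd A a (a + n)‖ ≤ ‖A (a + n)‖ * ‖clmProd A a (a + n)‖ :=
            norm_mul_le _ _
        _ ≤ Real.exp (c (a + n)) * Real.exp (∑ i ∈ Finset.range n, c (a + i)) := by
            apply mul_le_mul (hA _) ih (norm_nonneg _) (Real.exp_nonneg _)
        _ = Real.exp (∑ i ∈ Finset.range (n + 1), c (a + i)) := by
            rw [Finset.sum_range_succ, Real.exp_add, mul_comm]

/-- Uniform bound on products of gradient-descent linearization matrices.
There exist constants `C, η₀ > 0`, depending only on `μ, ρ₂, ρ₃, ε₀` (and in particular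
independent of `η` and `H`, hence of `α = Hη`), such that: for any `C³` function
`L : ℝ^d → ℝ` with `‖∇²L‖ ≤ ρ₂` and `‖∇³L‖ ≤ ρ₃` globally, any minimizer set `S`
satisfying the minimizer-set assumption with radii `ε₀ < ε₁ < ε₂ < ε₃`, any step size
`0 < η ≤ min(η₀, 1/ρ₂)`, and any gradient-descent iterates `ũ` with `dist(ũ₀, S) < ε₀`,
one has `‖∏_{l=τ+1}^{t−1}(I − η∇²L(ũ_l))‖ ≤ C` for all `0 ≤ τ < t ≤ H`. -/
theorem statement19 (μpl ρ₂ ρ₃ ε₀ : ℝ) (hμpl : 0 < μpl) (hε₀ : 0 < ε₀) :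
    ∃ C > 0, ∃ η₀ > 0,
      ∀ (d : ℕ) (L : EuclideanSpace ℝ (Fin d) → ℝ), ContDiff ℝ 3 L →
      (∀ θ, ‖fderiv ℝ (gradient L) θ‖ ≤ ρ₂) →
      (∀ θ, ‖iteratedFDeriv ℝ 3 L θ‖ ≤ ρ₃) →
      ∀ (Lstar : ℝ) (S : Set (EuclideanSpace ℝ (Fin d))) (ε₁ ε₂ ε₃ : ℝ),
      S.Nonempty → IsCompact S →
      (∀ θ ∈ S, gradient L θ = 0) → (∀ θ ∈ S, L θ = Lstar) →
      (∀ θ, Metric.infDist θ S < ε₃ → Lstar ≤ L θ) →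
      (∀ θ, Metric.infDist θ S < ε₃ →
        μpl * (L θ - Lstar) ≤ (1 / 2) * ‖gradient L θ‖ ^ 2) →
      (S = {θ | Metric.infDist θ S < ε₃ ∧ L θ = Lstar}) →
      ε₀ < ε₁ → ε₁ < ε₂ → ε₂ < ε₃ →
      ε₀ ≤ 1 / 4 * Real.sqrt (μpl / ρ₂) * ε₁ → ε₁ ≤ ε₂ / 2 →
      ε₂ ≤ Real.sqrt (μpl / ρ₂) * ε₃ →
      ∀ η : ℝ, 0 < η → η ≤ η₀ → η ≤ 1 / ρ₂ →
      ∀ (H : ℕ) (ut : ℕ → EuclideanSpace ℝ (Fin d)),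
      (∀ t, ut (t + 1) = ut t - η • gradient L (ut t)) →
      Metric.infDist (ut 0) S < ε₀ →
      ∀ τ t : ℕ, τ < t → t ≤ H →
        ‖clmProd (fun l =>
            (1 : EuclideanSpace ℝ (Fin d) →L[ℝ] EuclideanSpace ℝ (Fin d)) -
              η • fderiv ℝ (gradient L) (ut l)) (τ + 1) t‖ ≤ C := by
  have hsμ : 0 < Real.sqrt μpl := Real.sqrt_pos.mpr hμpl
  set sμ : ℝ := Real.sqrt μpl with hsμdef
  set K : ℝ := 3 / sμ with hKdef
  have hK0 : 0 < K := by positivity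
  set logC : ℝ := 6 * max ρ₃ 0 * Real.sqrt (max ρ₂ 0) * ε₀ / (μpl * sμ) with hlogCdef
  have hlogC0 : 0 ≤ logC := by positivity
  refine ⟨Real.exp logC, Real.exp_pos _,
    min (1 / (2 * μpl)) (1 / (100 * max ρ₂ 1)), ?_, ?_⟩
  · apply lt_min
    · positivity
    · have : (0:ℝ) < max ρ₂ 1 := lt_of_lt_of_le zero_lt_one (le_max_right _ _)
      positivity
  intro d L hC3 hρ₂b hρ₃b Lstar S ε₁ ε₂ ε₃ hSne hScomp hSgrad hSval hlb hPL hSet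
    h01 h12 h23 h0r h1r h2r η hη0 hηη₀ hηinv H ut hiter hu0 τ t hτt htH
  -- basic positivity facts
  have hε₁pos : 0 < ε₁ := lt_trans hε₀ h01
  have hε₂pos : 0 < ε₂ := lt_trans hε₁pos h12
  have hε₃pos : 0 < ε₃ := lt_trans hε₂pos h23
  have hρ₂pos : 0 < ρ₂ := by
    by_contra h
    push_neg at h
    have h9 : (1:ℝ) / ρ₂ ≤ 0 := one_div_nonpos.mpr h
    linarith only [h9, hη0, hηinv]
  have hρ₂0 : 0 ≤ ρ₂ := hρ₂pos.le
  have hρ₃0 : 0 ≤ ρ₃ := le_trans (norm_nonneg _) (hρ₃b 0)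
  have hημ : η * μpl ≤ 1 / 2 := by
    have h := le_trans hηη₀ (min_le_left _ _)
    have h2 := (le_div_iff₀ (by positivity : (0:ℝ) < 2 * μpl)).mp h
    linarith only [h2]
  have hηρ₂ : η * ρ₂ ≤ 1 / 100 := by
    have h := le_trans hηη₀ (min_le_right _ _)
    have hx : (0:ℝ) < 100 * max ρ₂ 1 :=
      by positivity
    have h2 : η * (100 * max ρ₂ 1) ≤ 1 := (le_div_iff₀ hx).mp h
    have h3 : ρ₂ ≤ max ρ₂ 1 := le_max_left _ _
    nlinarith only [hη0.le, h2, h3]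
  set sρ : ℝ := Real.sqrt ρ₂ with hsρdef
  have hsρ : 0 < sρ := Real.sqrt_pos.mpr hρ₂pos
  set z : ℝ := sρ / sμ with hzdef
  have hz : 0 < z := by positivity
  have hz1 : 4 * ε₀ * z ≤ ε₁ := by
    have e : Real.sqrt (μpl / ρ₂) = sμ / sρ := Real.sqrt_div hμpl.le ρ₂
    rw [e] at h0r
    have h4 : 4 * ε₀ * z ≤ 4 * (1 / 4 * (sμ / sρ) * ε₁) * z := by
      have := mul_le_mul_of_nonneg_right h0r hz.le
      nlinarith only [this]
    have h5 : 4 * (1 / 4 * (sμ / sρ) * ε₁) * z = ε₁ := by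
      rw [hzdef]
      field_simp
    linarith only [h4, h5]
  have hε₂chain : ε₀ + 4 * ε₀ * z < ε₂ := by
    linarith only [h1r, h01, hz1]
  -- gradient facts
  have hLdiff : Differentiable ℝ L := hC3.differentiable (by norm_num)
  have hgdiff : Differentiable ℝ (gradient L) :=
    (gradient_contDiff hC3).differentiable (by norm_num)
  have hglip : ∀ x y, ‖gradient L x - gradient L y‖ ≤ ρ₂ * ‖x - y‖ :=
    gradient_lipschitz hC3 hρ₂b
  have htay := taylor_upper hLdiff hρ₂0 hglip
  obtain ⟨En, hEn⟩ : ∃ En : ℕ → ℝ, ∀ n, En n = L (ut n) - Lstar :=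
    ⟨fun n => L (ut n) - Lstar, fun n => rfl⟩
  have hE00 : 0 ≤ En 0 := by
    have : Metric.infDist (ut 0) S < ε₃ := by
      calc Metric.infDist (ut 0) S < ε₀ := hu0
        _ < ε₃ := by linarith only [h01, h12, h23]
    have h9 := hlb (ut 0) this
    rw [hEn 0]
    linarith only [h9]
  have hE0ub : En 0 ≤ ρ₂ * ε₀ ^ 2 := by
    obtain ⟨p, hpS, hpd⟩ := hScomp.exists_infDist_eq_dist hSne (ut 0)
    have h1 : ut 0 = p + (ut 0 - p) := by abel
    have h2 := htay p (ut 0 - p)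
    rw [hSgrad p hpS] at h2
    simp only [inner_zero_left, add_zero] at h2
    rw [← h1, hSval p hpS] at h2
    have h3 : ‖ut 0 - p‖ < ε₀ := by
      rw [← dist_eq_norm, ← hpd]
      exact hu0
    have h4 : ‖ut 0 - p‖ ^ 2 ≤ ε₀ ^ 2 := by
      nlinarith only [norm_nonneg (ut 0 - p), h3]
    rw [hEn 0]
    have h6 := mul_le_mul_of_nonneg_left h4 hρ₂0
    linarith only [h2, h6]
  have hsE0 : Real.sqrt (En 0) ≤ sρ * ε₀ := by
    calc Real.sqrt (En 0) ≤ Real.sqrt (ρ₂ * ε₀ ^ 2) := Real.sqrt_le_sqrt hE0ub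
      _ = sρ * ε₀ := by
          rw [Real.sqrt_mul hρ₂0, Real.sqrt_sq hε₀.le]
  have hKE0 : K * Real.sqrt (En 0) ≤ 3 * ε₀ * z := by
    calc K * Real.sqrt (En 0) ≤ K * (sρ * ε₀) :=
          mul_le_mul_of_nonneg_left hsE0 hK0.le
      _ = 3 * ε₀ * z := by rw [hKdef, hzdef]; field_simp
  set q : ℝ := 1 - η * μpl with hqdef
  have hq0 : 0 ≤ q := by rw [hqdef]; linarith only [hημ]
  have hq1 : q < 1 := by
    rw [hqdef]
    have := mul_pos hη0 hμpl
    linarith only [this]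
  -- descent
  have hdesc : ∀ n, L (ut (n + 1)) ≤ L (ut n) - (99/100) * η * ‖gradient L (ut n)‖ ^ 2 := by
    intro n
    have h1 : ut (n + 1) = ut n + -(η • gradient L (ut n)) := by
      rw [hiter n]; abel
    have h2 := htay (ut n) (-(η • gradient L (ut n)))
    rw [← h1] at h2
    have h3 : ⟪gradient L (ut n), -(η • gradient L (ut n))⟫
        = -(η * ‖gradient L (ut n)‖ ^ 2) := by
      rw [inner_neg_right, real_inner_smul_right, real_inner_self_eq_norm_sq]
    have h4 : ‖-(η • gradient L (ut n))‖ ^ 2 = η ^ 2 * ‖gradient L (ut n)‖ ^ 2 := by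
      rw [norm_neg, norm_smul, Real.norm_eq_abs, abs_of_pos hη0, mul_pow]
    rw [h3, h4] at h2
    have h5 : 0 ≤ η * ‖gradient L (ut n)‖ ^ 2 :=
      mul_nonneg hη0.le (sq_nonneg _)
    have h6 : (η * ρ₂) * (η * ‖gradient L (ut n)‖ ^ 2)
        ≤ (1/100) * (η * ‖gradient L (ut n)‖ ^ 2) :=
      mul_le_mul_of_nonneg_right hηρ₂ h5
    linarith only [h2, h6]
  -- the main induction step
  have main : ∀ n : ℕ,
      (0 ≤ En n ∧ En n ≤ q ^ n * En 0 ∧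
        Metric.infDist (ut n) S ≤ ε₀ + K * (Real.sqrt (En 0) - Real.sqrt (En n))) →
      ((0 ≤ En (n+1) ∧ En (n+1) ≤ q ^ (n+1) * En 0 ∧
        Metric.infDist (ut (n+1)) S ≤ ε₀ + K * (Real.sqrt (En 0) - Real.sqrt (En (n+1)))) ∧
        dist (ut (n+1)) (ut n) ≤ K * (Real.sqrt (En n) - Real.sqrt (En (n+1)))) := by
    intro n ⟨h1, h2, h3⟩
    have hEn0ub : En n ≤ En 0 := by
      have hqn : q ^ n ≤ 1 := pow_le_one₀ hq0 hq1.le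
      have := mul_le_mul_of_nonneg_right hqn hE00
      linarith only [h2, this]
    have hsEn : Real.sqrt (En n) ≤ Real.sqrt (En 0) := Real.sqrt_le_sqrt hEn0ub
    have hsEn0 : 0 ≤ Real.sqrt (En n) := Real.sqrt_nonneg _
    have hDn : Metric.infDist (ut n) S ≤ ε₀ + 3 * ε₀ * z := by
      have hh : K * (Real.sqrt (En 0) - Real.sqrt (En n)) ≤ K * Real.sqrt (En 0) :=
        mul_le_mul_of_nonneg_left (by linarith only [hsEn0]) hK0.le
      linarith only [h3, hh, hKE0]
    have hDnlt : Metric.infDist (ut n) S < ε₂ := by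
      have hez : 0 ≤ ε₀ * z := mul_nonneg hε₀.le hz.le
      linarith only [hDn, hez, hε₂chain]
    have hDe3 : Metric.infDist (ut n) S < ε₃ := lt_trans hDnlt h23
    have hPLn : μpl * En n ≤ (1/2) * ‖gradient L (ut n)‖ ^ 2 := by
      rw [hEn n]
      exact hPL _ hDe3
    obtain ⟨p, hpS, hpd⟩ := hScomp.exists_infDist_eq_dist hSne (ut n)
    have hGle : ‖gradient L (ut n)‖ ≤ ρ₂ * Metric.infDist (ut n) S := by
      have hh := hglip (ut n) p
      rw [hSgrad p hpS, sub_zero] at hh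
      rw [hpd, dist_eq_norm]
      exact hh
    have hG0 : 0 ≤ ‖gradient L (ut n)‖ := norm_nonneg _
    have hdd : dist (ut (n+1)) (ut n) = η * ‖gradient L (ut n)‖ := by
      rw [dist_eq_norm, hiter n]
      have : ut n - η • gradient L (ut n) - ut n = -(η • gradient L (ut n)) := by abel
      rw [this, norm_neg, norm_smul, Real.norm_eq_abs, abs_of_pos hη0]
    have hd1 : Metric.infDist (ut (n+1)) S
        ≤ Metric.infDist (ut n) S + η * ‖gradient L (ut n)‖ := by
      have := Metric.infDist_le_infDist_add_dist (x := ut (n+1)) (y := ut n) (s := S)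
      rw [hdd] at this
      exact this
    have hDnn : 0 ≤ Metric.infDist (ut n) S := Metric.infDist_nonneg
    have hd2 : Metric.infDist (ut (n+1)) S < ε₂ := by
      have hX0 : (0:ℝ) ≤ ε₀ + 3 * ε₀ * z := by positivity
      have hgb1 : η * ‖gradient L (ut n)‖ ≤ η * (ρ₂ * Metric.infDist (ut n) S) :=
        mul_le_mul_of_nonneg_left hGle hη0.le
      have hgb2 : ρ₂ * Metric.infDist (ut n) S ≤ ρ₂ * (ε₀ + 3 * ε₀ * z) :=
        mul_le_mul_of_nonneg_left hDn hρ₂0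
      have hgb3 : η * (ρ₂ * Metric.infDist (ut n) S)
          ≤ η * (ρ₂ * (ε₀ + 3 * ε₀ * z)) :=
        mul_le_mul_of_nonneg_left hgb2 hη0.le
      have hslop : η * ρ₂ * (ε₀ + 3 * ε₀ * z) ≤ (1/100) * (ε₀ + 3 * ε₀ * z) :=
        mul_le_mul_of_nonneg_right hηρ₂ hX0
      have hb2 : (ε₀ + 3 * ε₀ * z) + (1/100) * (ε₀ + 3 * ε₀ * z) < ε₂ := by
        by_cases hzc : (1:ℝ)/97 ≤ z
        · have hεz : ε₀ * (1/97) ≤ ε₀ * z := mul_le_mul_of_nonneg_left hzc hε₀.le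
          linarith only [hεz, hz1, h01, h1r, hε₀]
        · push_neg at hzc
          have hεz : ε₀ * z ≤ ε₀ * (1/97) := (mul_lt_mul_of_pos_left hzc hε₀).le
          linarith only [hεz, h01, h1r, hε₀]
      calc Metric.infDist (ut (n+1)) S
          ≤ Metric.infDist (ut n) S + η * ‖gradient L (ut n)‖ := hd1
        _ ≤ (ε₀ + 3 * ε₀ * z) + (1/100) * (ε₀ + 3 * ε₀ * z) := by
            have heq9 : η * (ρ₂ * (ε₀ + 3 * ε₀ * z)) = η * ρ₂ * (ε₀ + 3 * ε₀ * z) := by ring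
            linarith only [heq9, hgb1, hgb3, hslop, hDn]
        _ < ε₂ := hb2
    have hd3 : Metric.infDist (ut (n+1)) S < ε₃ := lt_trans hd2 h23
    have hE1 : 0 ≤ En (n+1) := by
      have hthis := hlb (ut (n+1)) hd3
      rw [hEn (n+1)]
      linarith only [hthis]
    have hEdesc := hdesc n
    have hEq : En (n+1) ≤ q * En n := by
      have hG2 : 2 * μpl * En n ≤ ‖gradient L (ut n)‖ ^ 2 := by
        have hPLn' : μpl * En n ≤ (1/2) * ‖gradient L (ut n)‖ ^ 2 := hPLn
        linarith only [hPLn']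
      have h7 : η * (2 * μpl * En n) ≤ η * ‖gradient L (ut n)‖ ^ 2 :=
        mul_le_mul_of_nonneg_left hG2 hη0.le
      have h8 : 0 ≤ η * (μpl * En n) :=
        mul_nonneg hη0.le (mul_nonneg hμpl.le h1)
      have h9 : En (n+1) ≤ En n - (99/100) * η * ‖gradient L (ut n)‖ ^ 2 := by
        rw [hEn (n+1), hEn n]
        linarith only [hEdesc]
      have heq8 : q * En n = En n - η * (μpl * En n) := by rw [hqdef]; ring
      rw [heq8]
      linarith only [h7, h8, h9]
    have hE1q : En (n+1) ≤ q ^ (n+1) * En 0 := by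
      calc En (n+1) ≤ q * En n := hEq
        _ ≤ q * (q ^ n * En 0) := mul_le_mul_of_nonneg_left h2 hq0
        _ = q ^ (n+1) * En 0 := by rw [pow_succ]; ring
    have hstep : η * ‖gradient L (ut n)‖
        ≤ K * (Real.sqrt (En n) - Real.sqrt (En (n+1))) := by
      rcases eq_or_lt_of_le hG0 with hGz | hGpos
      · have hg0 : gradient L (ut n) = 0 := norm_eq_zero.mp hGz.symm
        have heq : ut (n+1) = ut n := by rw [hiter n, hg0, smul_zero, sub_zero]
        have hEe : En (n+1) = En n := by rw [hEn (n+1), hEn n, heq]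
        rw [hEe, ← hGz, mul_zero, sub_self, mul_zero]
      · have hEnpos : 0 < En n := by
          rcases eq_or_lt_of_le h1 with h | h
          · exfalso
            have h9 : En (n+1) ≤ En n - (99/100) * η * ‖gradient L (ut n)‖ ^ 2 := by
              rw [hEn (n+1), hEn n]
              linarith only [hEdesc]
            have hp : 0 < η * (‖gradient L (ut n)‖ * ‖gradient L (ut n)‖) :=
              mul_pos hη0 (mul_pos hGpos hGpos)
            linarith only [hp, hE1, h9, h]
          · exact h
        set a : ℝ := Real.sqrt (En n) with hadef
        set b : ℝ := Real.sqrt (En (n+1)) with hbdef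
        have ha2 : a ^ 2 = En n := Real.sq_sqrt h1
        have hb2 : b ^ 2 = En (n+1) := Real.sq_sqrt hE1
        have hapos : 0 < a := Real.sqrt_pos.mpr hEnpos
        have hb0 : 0 ≤ b := Real.sqrt_nonneg _
        have hba : b ≤ a := by
          apply Real.sqrt_le_sqrt
          have hq' : q * En n ≤ 1 * En n := mul_le_mul_of_nonneg_right hq1.le h1
          linarith only [hEq, hq']
        have hsq : (sμ * a) ^ 2 ≤ ‖gradient L (ut n)‖ ^ 2 := by
          rw [mul_pow]
          have hμs : sμ ^ 2 = μpl := Real.sq_sqrt hμpl.le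
          rw [hμs, ha2]
          have hμE : 0 ≤ μpl * En n := mul_nonneg hμpl.le h1
          linarith only [hPLn, hμE]
        have hGa : sμ * a ≤ ‖gradient L (ut n)‖ := by
          have hnn : 0 ≤ sμ * a := by positivity
          have := Real.sqrt_le_sqrt hsq
          rwa [Real.sqrt_sq hnn, Real.sqrt_sq hG0] at this
        have hdescq : η * ‖gradient L (ut n)‖ ^ 2 ≤ (100/99) * (a ^ 2 - b ^ 2) := by
          have : En (n+1) ≤ En n - (99/100) * η * ‖gradient L (ut n)‖ ^ 2 := by
            rw [hEn (n+1), hEn n]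
            linarith only [hEdesc]
          rw [← ha2, ← hb2] at this
          linarith only [this]
        have h1' : η * ‖gradient L (ut n)‖ ^ 2 ≤ (200/99) * ((a - b) * a) := by
          have hab : a + b ≤ 2 * a := by linarith only [hba]
          have hint := mul_le_mul_of_nonneg_left hab
            (mul_nonneg (by norm_num : (0:ℝ) ≤ 100/99) (sub_nonneg.mpr hba))
          nlinarith only [hdescq, hint]
        have h2' : (a - b) * (sμ * a) ≤ (a - b) * ‖gradient L (ut n)‖ :=
          mul_le_mul_of_nonneg_left hGa (sub_nonneg.mpr hba)
        have hGsμ : 0 < ‖gradient L (ut n)‖ * sμ := mul_pos hGpos hsμ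
        have h3' : η * ‖gradient L (ut n)‖ * (‖gradient L (ut n)‖ * sμ)
            ≤ K * (a - b) * (‖gradient L (ut n)‖ * sμ) := by
          calc η * ‖gradient L (ut n)‖ * (‖gradient L (ut n)‖ * sμ)
              = sμ * (η * ‖gradient L (ut n)‖ ^ 2) := by ring
            _ ≤ sμ * ((200/99) * ((a - b) * a)) :=
                mul_le_mul_of_nonneg_left h1' hsμ.le
            _ = (200/99) * ((a - b) * (sμ * a)) := by ring
            _ ≤ (200/99) * ((a - b) * ‖gradient L (ut n)‖) :=
                mul_le_mul_of_nonneg_left h2' (by norm_num)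
            _ ≤ 3 * ((a - b) * ‖gradient L (ut n)‖) := by
                have hX := mul_nonneg (sub_nonneg.mpr hba) hG0
                linarith only [hX]
            _ = K * (a - b) * (‖gradient L (ut n)‖ * sμ) := by
                rw [hKdef]; field_simp
        exact le_of_mul_le_mul_right h3' hGsμ
    have hdnew : Metric.infDist (ut (n+1)) S
        ≤ ε₀ + K * (Real.sqrt (En 0) - Real.sqrt (En (n+1))) := by
      linarith only [h3, hstep, hd1]
    exact ⟨⟨hE1, hE1q, hdnew⟩, by rw [hdd]; exact hstep⟩
  have key : ∀ n : ℕ, 0 ≤ En n ∧ En n ≤ q ^ n * En 0 ∧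
      Metric.infDist (ut n) S ≤ ε₀ + K * (Real.sqrt (En 0) - Real.sqrt (En n)) := by
    intro n
    induction n with
    | zero =>
        refine ⟨hE00, by rw [pow_zero, one_mul], ?_⟩
        rw [sub_self, mul_zero, add_zero]
        exact hu0.le
    | succ n ih => exact (main n ih).1
  have keystep : ∀ n : ℕ,
      dist (ut (n+1)) (ut n) ≤ K * (Real.sqrt (En n) - Real.sqrt (En (n+1))) :=
    fun n => (main n (key n)).2
  -- geometric decay of sqrt energies
  have hsq0 : 0 ≤ Real.sqrt q := Real.sqrt_nonneg _
  have hsq1 : Real.sqrt q < 1 := by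
    have := Real.sqrt_lt_sqrt hq0 hq1
    rwa [Real.sqrt_one] at this
  have hEr : ∀ n : ℕ, Real.sqrt (En n) ≤ Real.sqrt (En 0) * (Real.sqrt q) ^ n := by
    intro n
    have h := (key n).2.1
    have hpow : Real.sqrt (q ^ n) = (Real.sqrt q) ^ n := by
      have hp2 : ((Real.sqrt q) ^ n) ^ 2 = q ^ n := by
        rw [← pow_mul, mul_comm, pow_mul, Real.sq_sqrt hq0]
      rw [← hp2, Real.sqrt_sq (pow_nonneg hsq0 n)]
    calc Real.sqrt (En n) ≤ Real.sqrt (q ^ n * En 0) := Real.sqrt_le_sqrt h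
      _ = (Real.sqrt q) ^ n * Real.sqrt (En 0) := by
          rw [Real.sqrt_mul (pow_nonneg hq0 n), hpow]
      _ = Real.sqrt (En 0) * (Real.sqrt q) ^ n := by ring
  -- telescoping distance bound
  have htel : ∀ l m : ℕ, l ≤ m →
      dist (ut l) (ut m) ≤ K * (Real.sqrt (En l) - Real.sqrt (En m)) := by
    intro l m hlm
    induction m, hlm using Nat.le_induction with
    | base => simp
    | succ m hlm ih =>
        have h1 := dist_triangle (ut l) (ut m) (ut (m+1))
        have h2 := keystep m
        rw [dist_comm (ut (m+1)) (ut m)] at h2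
        linarith only [h1, h2, ih]
  -- the limit point
  have hcau : CauchySeq ut := by
    apply cauchySeq_of_le_geometric (Real.sqrt q) (K * Real.sqrt (En 0)) hsq1
    intro n
    have h1 := keystep n
    rw [dist_comm (ut (n+1)) (ut n)] at h1
    have h2 : K * (Real.sqrt (En n) - Real.sqrt (En (n+1))) ≤ K * Real.sqrt (En n) :=
      mul_le_mul_of_nonneg_left
        (by linarith only [Real.sqrt_nonneg (En (n+1))]) hK0.le
    have h3 : K * Real.sqrt (En n) ≤ K * (Real.sqrt (En 0) * (Real.sqrt q) ^ n) :=
      mul_le_mul_of_nonneg_left (hEr n) hK0.le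
    calc dist (ut n) (ut (n+1)) ≤ K * Real.sqrt (En n) := by linarith only [h1, h2]
      _ ≤ K * Real.sqrt (En 0) * (Real.sqrt q) ^ n := by rw [mul_assoc]; exact h3
  obtain ⟨ul, hul⟩ := cauchySeq_tendsto_of_complete hcau
  have hEtend : Tendsto En atTop (nhds 0) := by
    have hgeo : Tendsto (fun n : ℕ => q ^ n * En 0) atTop (nhds 0) := by
      have := (tendsto_pow_atTop_nhds_zero_of_lt_one hq0 hq1).mul_const (En 0)
      simpa using this
    exact tendsto_of_tendsto_of_tendsto_of_le_of_le tendsto_const_nhds hgeo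
      (fun n => (key n).1) (fun n => (key n).2.1)
  have hLul : L ul = Lstar := by
    have h1 : Tendsto (fun n => L (ut n)) atTop (nhds (L ul)) :=
      (hC3.continuous.tendsto ul).comp hul
    have h2 : Tendsto (fun n => L (ut n)) atTop (nhds Lstar) := by
      have h3 := hEtend.add_const Lstar
      simp only [zero_add] at h3
      have h4 : (fun n => En n + Lstar) = fun n => L (ut n) := by
        funext n
        rw [hEn n]
        ring
      rwa [h4] at h3
    exact tendsto_nhds_unique h1 h2
  have hdub : ∀ n, Metric.infDist (ut n) S ≤ ε₀ + 3 * ε₀ * z := by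
    intro n
    have h := (key n).2.2
    have hh : K * (Real.sqrt (En 0) - Real.sqrt (En n)) ≤ K * Real.sqrt (En 0) :=
      mul_le_mul_of_nonneg_left (by linarith only [Real.sqrt_nonneg (En n)]) hK0.le
    linarith only [h, hh, hKE0]
  have hdul : Metric.infDist ul S < ε₃ := by
    have h1 : Tendsto (fun n => Metric.infDist (ut n) S) atTop
        (nhds (Metric.infDist ul S)) :=
      ((Metric.continuous_infDist_pt S).tendsto ul).comp hul
    have h2 := le_of_tendsto h1 (Filter.Eventually.of_forall hdub)
    have hez : 0 ≤ ε₀ * z := mul_nonneg hε₀.le hz.le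
    linarith only [h2, hez, hε₂chain, h23]
  have hulS : ul ∈ S := by
    rw [hSet]
    exact ⟨hdul, hLul⟩
  have hdl : ∀ l : ℕ, Metric.infDist (ut l) S ≤ K * Real.sqrt (En l) := by
    intro l
    refine le_trans (Metric.infDist_le_dist_of_mem hulS) ?_
    have h1 : Tendsto (fun m => dist (ut l) (ut m)) atTop (nhds (dist (ut l) ul)) :=
      Filter.Tendsto.dist tendsto_const_nhds hul
    apply le_of_tendsto h1
    rw [Filter.eventually_atTop]
    refine ⟨l, fun m hm => ?_⟩
    refine le_trans (htel l m hm) ?_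
    exact mul_le_mul_of_nonneg_left
      (by linarith only [Real.sqrt_nonneg (En m)]) hK0.le
  -- the factor bound
  have hfac : ∀ l : ℕ,
      ‖(1 : EuclideanSpace ℝ (Fin d) →L[ℝ] EuclideanSpace ℝ (Fin d)) -
        η • fderiv ℝ (gradient L) (ut l)‖
      ≤ Real.exp (η * (ρ₃ * (K * Real.sqrt (En l)))) := by
    intro l
    obtain ⟨p, hpS, hpd⟩ := hScomp.exists_infDist_eq_dist hSne (ut l)
    have hmin : ∀ z' : EuclideanSpace ℝ (Fin d), ‖z' - p‖ < ε₃ → L p ≤ L z' := by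
      intro z' hz'
      rw [hSval p hpS]
      apply hlb
      calc Metric.infDist z' S ≤ dist z' p := Metric.infDist_le_dist_of_mem hpS
        _ = ‖z' - p‖ := dist_eq_norm _ _
        _ < ε₃ := hz'
    have hpos := hessian_psd_at_min hC3 hgdiff p hε₃pos hmin (hSgrad p hpS)
    have hsymAp := hessian_symm hC3 p
    have hA2 : η * ‖fderiv ℝ (gradient L) p‖ ≤ 2 := by
      have := mul_le_mul_of_nonneg_left (hρ₂b p) hη0.le
      linarith only [this, hηρ₂]
    have hcontr := contraction_of_psd _ hsymAp hpos η hη0.le hA2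
    have hlips := hessian_lipschitz hC3 hρ₃b (ut l) p
    have hsplit : (1 : EuclideanSpace ℝ (Fin d) →L[ℝ] EuclideanSpace ℝ (Fin d)) -
        η • fderiv ℝ (gradient L) (ut l)
        = ((1 : EuclideanSpace ℝ (Fin d) →L[ℝ] EuclideanSpace ℝ (Fin d)) -
            η • fderiv ℝ (gradient L) p) -
          η • (fderiv ℝ (gradient L) (ut l) - fderiv ℝ (gradient L) p) := by
      rw [smul_sub]
      abel
    have hdp : ‖ut l - p‖ ≤ K * Real.sqrt (En l) := by
      rw [← dist_eq_norm, ← hpd]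
      exact hdl l
    have hnorm : ‖(1 : EuclideanSpace ℝ (Fin d) →L[ℝ] EuclideanSpace ℝ (Fin d)) -
        η • fderiv ℝ (gradient L) (ut l)‖ ≤ 1 + η * (ρ₃ * (K * Real.sqrt (En l))) := by
      rw [hsplit]
      refine le_trans (norm_sub_le _ _) ?_
      have h1 : ‖η • (fderiv ℝ (gradient L) (ut l) - fderiv ℝ (gradient L) p)‖
          = η * ‖fderiv ℝ (gradient L) (ut l) - fderiv ℝ (gradient L) p‖ := by
        rw [norm_smul, Real.norm_eq_abs, abs_of_pos hη0]
      rw [h1]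
      have h2 : ‖fderiv ℝ (gradient L) (ut l) - fderiv ℝ (gradient L) p‖
          ≤ ρ₃ * (K * Real.sqrt (En l)) :=
        le_trans hlips (mul_le_mul_of_nonneg_left hdp hρ₃0)
      have h3 := mul_le_mul_of_nonneg_left h2 hη0.le
      linarith only [hcontr, h3]
    refine le_trans hnorm ?_
    linarith only [Real.add_one_le_exp (η * (ρ₃ * (K * Real.sqrt (En l))))]
  -- summing up
  have hsum : ∀ n : ℕ, ∑ i ∈ Finset.range n,
      (η * (ρ₃ * (K * Real.sqrt (En (τ + 1 + i))))) ≤ logC := by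
    intro n
    set M : ℝ := η * (ρ₃ * (K * Real.sqrt (En 0))) with hMdef
    have hM0 : 0 ≤ M := by positivity
    have hterm : ∀ i : ℕ, η * (ρ₃ * (K * Real.sqrt (En (τ + 1 + i))))
        ≤ M * (Real.sqrt q) ^ i := by
      intro i
      have h1 : Real.sqrt (En (τ + 1 + i))
          ≤ Real.sqrt (En 0) * (Real.sqrt q) ^ (τ + 1 + i) := hEr _
      have h2 : (Real.sqrt q) ^ (τ + 1 + i) ≤ (Real.sqrt q) ^ i :=
        pow_le_pow_of_le_one hsq0 hsq1.le (Nat.le_add_left i (τ + 1))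
      have h3 : Real.sqrt (En (τ + 1 + i)) ≤ Real.sqrt (En 0) * (Real.sqrt q) ^ i := by
        calc Real.sqrt (En (τ + 1 + i))
            ≤ Real.sqrt (En 0) * (Real.sqrt q) ^ (τ + 1 + i) := h1
          _ ≤ Real.sqrt (En 0) * (Real.sqrt q) ^ i :=
              mul_le_mul_of_nonneg_left h2 (Real.sqrt_nonneg _)
      calc η * (ρ₃ * (K * Real.sqrt (En (τ + 1 + i))))
          ≤ η * (ρ₃ * (K * (Real.sqrt (En 0) * (Real.sqrt q) ^ i))) := by
            apply mul_le_mul_of_nonneg_left _ hη0.le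
            apply mul_le_mul_of_nonneg_left _ hρ₃0
            exact mul_le_mul_of_nonneg_left h3 hK0.le
        _ = M * (Real.sqrt q) ^ i := by rw [hMdef]; ring
    have hgeom : (∑ i ∈ Finset.range n, (Real.sqrt q) ^ i) ≤ 1 / (1 - Real.sqrt q) := by
      have hlt : 0 < 1 - Real.sqrt q := by linarith only [hsq1]
      rw [le_div_iff₀ hlt]
      have hgs := geom_sum_mul (Real.sqrt q) n
      have h2 : (∑ i ∈ Finset.range n, (Real.sqrt q) ^ i) * (1 - Real.sqrt q)
          = 1 - (Real.sqrt q) ^ n := by linarith only [hgs]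
      rw [h2]
      have hpn := pow_nonneg hsq0 n
      linarith only [hpn]
    have hsum1 : ∑ i ∈ Finset.range n,
        (η * (ρ₃ * (K * Real.sqrt (En (τ + 1 + i)))))
        ≤ M * (1 / (1 - Real.sqrt q)) := by
      calc ∑ i ∈ Finset.range n, (η * (ρ₃ * (K * Real.sqrt (En (τ + 1 + i)))))
          ≤ ∑ i ∈ Finset.range n, M * (Real.sqrt q) ^ i :=
            Finset.sum_le_sum (fun i _ => hterm i)
        _ = M * ∑ i ∈ Finset.range n, (Real.sqrt q) ^ i := by rw [Finset.mul_sum]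
        _ ≤ M * (1 / (1 - Real.sqrt q)) := mul_le_mul_of_nonneg_left hgeom hM0
    -- 1 - sqrt q ≥ η μ / 2
    have hlow : η * μpl / 2 ≤ 1 - Real.sqrt q := by
      have hqq : (Real.sqrt q) ^ 2 = q := Real.sq_sqrt hq0
      have hqe : q = 1 - η * μpl := hqdef
      nlinarith only [sq_nonneg (Real.sqrt q - 1), hqq, hqe]
    have hlt : 0 < 1 - Real.sqrt q := by linarith only [hsq1]
    have hημpos : 0 < η * μpl / 2 := by positivity
    have hfrac : M * (1 / (1 - Real.sqrt q)) ≤ M * (1 / (η * μpl / 2)) := by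
      apply mul_le_mul_of_nonneg_left _ hM0
      exact one_div_le_one_div_of_le hημpos hlow
    have heq : M * (1 / (η * μpl / 2)) = 2 * (ρ₃ * (K * Real.sqrt (En 0))) / μpl := by
      rw [hMdef]
      field_simp
    have hfinal : 2 * (ρ₃ * (K * Real.sqrt (En 0))) / μpl ≤ logC := by
      rw [hlogCdef]
      have hm3 : max ρ₃ 0 = ρ₃ := max_eq_left hρ₃0
      have hm2 : Real.sqrt (max ρ₂ 0) = sρ := by rw [max_eq_left hρ₂0]
      rw [hm3, hm2]
      have h1 : ρ₃ * (K * Real.sqrt (En 0)) ≤ ρ₃ * (K * (sρ * ε₀)) := by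
        apply mul_le_mul_of_nonneg_left _ hρ₃0
        exact mul_le_mul_of_nonneg_left hsE0 hK0.le
      have h2 : 2 * (ρ₃ * (K * (sρ * ε₀))) / μpl = 6 * ρ₃ * sρ * ε₀ / (μpl * sμ) := by
        rw [hKdef]
        field_simp
        ring
      calc 2 * (ρ₃ * (K * Real.sqrt (En 0))) / μpl
          ≤ 2 * (ρ₃ * (K * (sρ * ε₀))) / μpl :=
            (div_le_div_iff_of_pos_right hμpl).mpr (by linarith only [h1])
        _ = 6 * ρ₃ * sρ * ε₀ / (μpl * sμ) := h2
    linarith only [hsum1, hfrac, hfinal, heq]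
  -- conclusion
  have hrepr : t = (τ + 1) + (t - (τ + 1)) := by omega
  have hbound := norm_clmProd_le
    (fun l => (1 : EuclideanSpace ℝ (Fin d) →L[ℝ] EuclideanSpace ℝ (Fin d)) -
      η • fderiv ℝ (gradient L) (ut l))
    (fun l => η * (ρ₃ * (K * Real.sqrt (En l)))) (fun l => hfac l) (τ + 1) (t - (τ + 1))
  rw [← hrepr] at hbound
  refine le_trans hbound ?_
  exact Real.exp_le_exp.mpr (hsum (t - (τ + 1)))
end
end
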